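/- arXiv:1208.2573 — 5 statements merged into one kernel-verified Lean document; each statement's English description precedes it below -/
import Mathlib

section
/- Let f : [a,b] → ℝ (a < b) be such that f′ is absolutely continuous on [a,b], f″ ∈ L¹[a,b], and |f″|^q is s-convex in the second sense on [a,b] for some fixed s ∈ (0,1], where q > 1 and 1/p + 1/q = 1. Then |(1/(b−a))∫_a^b f(t) dt − (1/2)[f((3a+b)/4) + f((a+3b)/4)]| ≤ ((b−a)²/(128(2p+1)^{1/p}(s+1)^{1/q})){(|f″(a)|^q + |f″((3a+b)/4)|^q)^{1/q} + 2(|f″((3a+b)/4)|^q + |f″((a+3b)/4)|^q)^{1/q} + (|f″((a+3b)/4)|^q + |f″(b)|^q)^{1/q}}. -/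
open MeasureTheory intervalIntegral

def SConvexOn (s : ℝ) (D : Set ℝ) (g : ℝ → ℝ) : Prop :=
  ∀ x ∈ D, ∀ y ∈ D, ∀ α β : ℝ, 0 ≤ α → 0 ≤ β → α + β = 1 →
    g (α * x + β * y) ≤ α ^ s * g x + β ^ s * g y

lemma intB (c d r : ℝ) (hr : -1 < r) :
    ∫ t in c..d, (d - t) ^ r = (d - c) ^ (r + 1) / (r + 1) := by
  rw [intervalIntegral.integral_comp_sub_left (fun u => u ^ r) d]
  rw [integral_rpow (Or.inl hr), sub_self, Real.zero_rpow (by linarith), sub_zero]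

lemma intA (c d r : ℝ) (hr : -1 < r) :
    ∫ t in c..d, (t - c) ^ r = (d - c) ^ (r + 1) / (r + 1) := by
  rw [intervalIntegral.integral_comp_sub_right (fun u => u ^ r) c]
  rw [integral_rpow (Or.inl hr), sub_self, Real.zero_rpow (by linarith), sub_zero]

lemma intAlpha (c d s : ℝ) (hcd : c < d) (hs : 0 < s) :
    ∫ t in c..d, ((d - t)/(d - c)) ^ s = (d - c)/(s+1) := by
  have hL : 0 < d - c := sub_pos.2 hcd
  have hLs : (0:ℝ) < (d-c) ^ s := Real.rpow_pos_of_pos hL s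
  have h1 : ∀ t ∈ Set.uIcc c d, ((d - t)/(d - c)) ^ s = (d - t) ^ s * ((d - c) ^ s)⁻¹ := by
    intro t ht; rw [Set.uIcc_of_le hcd.le] at ht
    rw [Real.div_rpow (by linarith [ht.2]) hL.le, div_eq_mul_inv]
  rw [intervalIntegral.integral_congr h1, intervalIntegral.integral_mul_const,
    intB c d s (by linarith), Real.rpow_add hL, Real.rpow_one]
  field_simp

lemma intBeta (c d s : ℝ) (hcd : c < d) (hs : 0 < s) :
    ∫ t in c..d, ((t - c)/(d - c)) ^ s = (d - c)/(s+1) := by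
  have hL : 0 < d - c := sub_pos.2 hcd
  have hLs : (0:ℝ) < (d-c) ^ s := Real.rpow_pos_of_pos hL s
  have h1 : ∀ t ∈ Set.uIcc c d, ((t - c)/(d - c)) ^ s = (t - c) ^ s * ((d - c) ^ s)⁻¹ := by
    intro t ht; rw [Set.uIcc_of_le hcd.le] at ht
    rw [Real.div_rpow (by linarith [ht.1]) hL.le, div_eq_mul_inv]
  rw [intervalIntegral.integral_congr h1, intervalIntegral.integral_mul_const,
    intA c d s (by linarith), Real.rpow_add hL, Real.rpow_one]
  field_simp

section aux
variable (a b s q : ℝ) (f'' : ℝ → ℝ)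

lemma gbd (hq : 0 < q) (hs0 : 0 < s)
    (hconv : SConvexOn s (Set.Icc a b) (fun t => |f'' t| ^ q))
    (c d : ℝ) (hc : a ≤ c) (hd : d ≤ b) (hcd : c < d) :
    ∀ t ∈ Set.Icc c d, |f'' t| ^ q ≤ |f'' c| ^ q + |f'' d| ^ q := by
  intro t ht
  have hL : 0 < d - c := sub_pos.2 hcd
  have h := hconv c ⟨hc, by linarith⟩ d ⟨by linarith, hd⟩ ((d-t)/(d-c)) ((t-c)/(d-c))
    (div_nonneg (by linarith [ht.2]) hL.le) (div_nonneg (by linarith [ht.1]) hL.le)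
    (by field_simp; ring)
  have ht' : (d-t)/(d-c) * c + (t-c)/(d-c) * d = t := by field_simp; ring
  rw [ht'] at h
  refine h.trans ?_
  have h1 : ((d-t)/(d-c)) ^ s ≤ 1 :=
    Real.rpow_le_one (div_nonneg (by linarith [ht.2]) hL.le)
      (div_le_one_of_le₀ (by linarith [ht.1]) hL.le) hs0.le
  have h2 : ((t-c)/(d-c)) ^ s ≤ 1 :=
    Real.rpow_le_one (div_nonneg (by linarith [ht.1]) hL.le)
      (div_le_one_of_le₀ (by linarith [ht.2]) hL.le) hs0.le
  have g1 : (0:ℝ) ≤ |f'' c| ^ q := Real.rpow_nonneg (abs_nonneg _) q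
  have g2 : (0:ℝ) ≤ |f'' d| ^ q := Real.rpow_nonneg (abs_nonneg _) q
  have := mul_le_of_le_one_left g1 h1
  have := mul_le_of_le_one_left g2 h2
  simp only []
  linarith
end aux

section aux2
variable {a b s q : ℝ} {f'' : ℝ → ℝ}

lemma ptwise (hs0 : 0 < s)
    (hconv : SConvexOn s (Set.Icc a b) (fun t => |f'' t| ^ q))
    (c d : ℝ) (hc : a ≤ c) (hd : d ≤ b) (hcd : c < d) :
    ∀ t ∈ Set.Icc c d, |f'' t| ^ q ≤
      ((d - t)/(d - c)) ^ s * |f'' c| ^ q + ((t - c)/(d - c)) ^ s * |f'' d| ^ q := by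
  intro t ht
  have hL : 0 < d - c := sub_pos.2 hcd
  have h := hconv c ⟨hc, by linarith⟩ d ⟨by linarith, hd⟩ ((d-t)/(d-c)) ((t-c)/(d-c))
    (div_nonneg (by linarith [ht.2]) hL.le) (div_nonneg (by linarith [ht.1]) hL.le)
    (by field_simp; ring)
  have ht' : (d-t)/(d-c) * c + (t-c)/(d-c) * d = t := by field_simp; ring
  rw [ht'] at h
  exact h

lemma gInt (hq : 0 < q) (hs0 : 0 < s)
    (hconv : SConvexOn s (Set.Icc a b) (fun t => |f'' t| ^ q))
    (hint : IntervalIntegrable f'' volume a b) (hab : a ≤ b)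
    (c d : ℝ) (hc : a ≤ c) (hd : d ≤ b) (hcd : c < d) :
    IntervalIntegrable (fun t => |f'' t| ^ q) volume c d := by
  have hsub : IntervalIntegrable f'' volume c d :=
    hint.mono_set (by rw [Set.uIcc_of_le hcd.le, Set.uIcc_of_le hab]; exact Set.Icc_subset_Icc hc hd)
  have hmeas2 : AEStronglyMeasurable (fun t => |f'' t| ^ q)
      (volume.restrict (Set.Ioc c d)) :=
    (continuous_abs.rpow_const (fun x => Or.inr hq.le)).comp_aestronglyMeasurable
      hsub.1.aestronglyMeasurable
  constructor
  · apply Integrable.mono' (g := fun _ => |f'' c| ^ q + |f'' d| ^ q)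
      (integrableOn_const measure_Ioc_lt_top.ne) hmeas2
    filter_upwards [ae_restrict_mem measurableSet_Ioc] with t ht
    rw [Real.norm_eq_abs, abs_of_nonneg (Real.rpow_nonneg (abs_nonneg _) q)]
    exact gbd a b s q f'' hq hs0 hconv c d hc hd hcd t ⟨ht.1.le, ht.2⟩
  · rw [Set.Ioc_eq_empty (by simpa using hcd.le)]
    exact integrableOn_empty

lemma sconv_int (hq : 0 < q) (hs0 : 0 < s)
    (hconv : SConvexOn s (Set.Icc a b) (fun t => |f'' t| ^ q))
    (hint : IntervalIntegrable f'' volume a b) (hab : a ≤ b)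
    (c d : ℝ) (hc : a ≤ c) (hd : d ≤ b) (hcd : c < d) :
    ∫ t in c..d, |f'' t| ^ q ≤ (d - c)/(s + 1) * (|f'' c| ^ q + |f'' d| ^ q) := by
  have hL : 0 < d - c := sub_pos.2 hcd
  have hca : Continuous fun t => ((d - t)/(d - c)) ^ s :=
    ((continuous_const.sub continuous_id).div_const _).rpow_const (fun x => Or.inr hs0.le)
  have hcb : Continuous fun t => ((t - c)/(d - c)) ^ s :=
    ((continuous_id.sub continuous_const).div_const _).rpow_const (fun x => Or.inr hs0.le)
  have hRHS : IntervalIntegrable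
      (fun t => ((d - t)/(d - c)) ^ s * |f'' c| ^ q + ((t - c)/(d - c)) ^ s * |f'' d| ^ q)
      volume c d :=
    ((hca.mul continuous_const).add (hcb.mul continuous_const)).intervalIntegrable c d
  have step := intervalIntegral.integral_mono_on hcd.le
    (gInt hq hs0 hconv hint hab c d hc hd hcd) hRHS
    (ptwise hs0 hconv c d hc hd hcd)
  refine step.trans ?_
  rw [intervalIntegral.integral_add (f := fun t => ((d - t)/(d - c)) ^ s * |f'' c| ^ q)
      (g := fun t => ((t - c)/(d - c)) ^ s * |f'' d| ^ q)
      ((hca.mul continuous_const).intervalIntegrable c d)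
      ((hcb.mul continuous_const).intervalIntegrable c d),
    intervalIntegral.integral_mul_const, intervalIntegral.integral_mul_const,
    intAlpha c d s hcd hs0, intBeta c d s hcd hs0]
  ring_nf
  exact le_refl _
end aux2


lemma holder_step (c d p q : ℝ) (hcd : c ≤ d) (hp : 1 < p) (hpq : 1/p + 1/q = 1)
    (φ g2 : ℝ → ℝ) (hφc : Continuous φ) (hφ0 : ∀ t ∈ Set.Ioc c d, 0 ≤ φ t)
    (hg2meas : AEStronglyMeasurable g2 (volume.restrict (Set.Ioc c d)))
    (hg20 : ∀ t, 0 ≤ g2 t)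
    (Mφ : ℝ) (hMφ : ∀ t ∈ Set.Ioc c d, φ t ≤ Mφ)
    (M : ℝ) (hM : ∀ t ∈ Set.Ioc c d, g2 t ≤ M) :
    ∫ t in c..d, φ t * g2 t ≤
      (∫ t in c..d, φ t ^ p) ^ (1/p) * (∫ t in c..d, g2 t ^ q) ^ (1/q) := by
  rw [intervalIntegral.integral_of_le hcd, intervalIntegral.integral_of_le hcd,
    intervalIntegral.integral_of_le hcd]
  haveI : IsFiniteMeasure (volume.restrict (Set.Ioc c d)) := by
    constructor
    rw [Measure.restrict_apply_univ, Real.volume_Ioc]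
    exact ENNReal.ofReal_lt_top
  have hpq' : p.HolderConjugate q := Real.holderConjugate_iff.mpr ⟨hp, by simpa [one_div] using hpq⟩
  have hφmem : MemLp φ (ENNReal.ofReal p) (volume.restrict (Set.Ioc c d)) := by
    apply MemLp.of_bound (hφc.aestronglyMeasurable.restrict) Mφ
    filter_upwards [ae_restrict_mem measurableSet_Ioc] with t ht
    rw [Real.norm_eq_abs, abs_of_nonneg (hφ0 t ht)]
    exact hMφ t ht
  have hgmem : MemLp g2 (ENNReal.ofReal q) (volume.restrict (Set.Ioc c d)) := by
    apply MemLp.of_bound hg2meas M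
    filter_upwards [ae_restrict_mem measurableSet_Ioc] with t ht
    rw [Real.norm_eq_abs, abs_of_nonneg (hg20 t)]
    exact hM t ht
  apply integral_mul_le_Lp_mul_Lq_of_nonneg hpq'
    (by filter_upwards [ae_restrict_mem measurableSet_Ioc] with t ht; exact hφ0 t ht)
    (Filter.Eventually.of_forall hg20) hφmem hgmem

lemma kernelA (c d p : ℝ) (hcd : c ≤ d) (hp : 0 < p) :
    ∫ t in c..d, ((t - c) ^ 2 / 2) ^ p = (d - c) ^ (2 * p + 1) / (2 ^ p * (2 * p + 1)) := by
  have h1 : ∀ t ∈ Set.uIcc c d, ((t - c) ^ 2 / 2) ^ p = (t - c) ^ (2 * p) / 2 ^ p := by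
    intro t ht
    rw [Set.uIcc_of_le hcd] at ht
    have h0 : (0:ℝ) ≤ t - c := by linarith [ht.1]
    rw [Real.div_rpow (sq_nonneg _) (by norm_num)]
    congr 1
    rw [← Real.rpow_natCast (t - c) 2, ← Real.rpow_mul h0]
    norm_num [mul_comm]
  rw [intervalIntegral.integral_congr h1]
  rw [intervalIntegral.integral_div, intA c d (2*p) (by linarith)]
  rw [div_div]; ring_nf


lemma kernelB (c d p : ℝ) (hcd : c ≤ d) (hp : 0 < p) :
    ∫ t in c..d, ((d - t) ^ 2 / 2) ^ p = (d - c) ^ (2 * p + 1) / (2 ^ p * (2 * p + 1)) := by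
  have h1 : ∀ t ∈ Set.uIcc c d, ((d - t) ^ 2 / 2) ^ p = (d - t) ^ (2 * p) / 2 ^ p := by
    intro t ht
    rw [Set.uIcc_of_le hcd] at ht
    have h0 : (0:ℝ) ≤ d - t := by linarith [ht.2]
    rw [Real.div_rpow (sq_nonneg _) (by norm_num)]
    congr 1
    rw [← Real.rpow_natCast (d - t) 2, ← Real.rpow_mul h0]
    norm_num [mul_comm]
  rw [intervalIntegral.integral_congr h1]
  rw [intervalIntegral.integral_div, intB c d (2*p) (by linarith)]
  rw [div_div]; ring_nf

lemma parts_lemma (a b : ℝ) (f f' f'' : ℝ → ℝ)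
    (hf' : ∀ t ∈ Set.Icc a b, HasDerivAt f (f' t) t)
    (hf'' : ∀ t ∈ Set.Icc a b, HasDerivAt f' (f'' t) t)
    (hint : IntervalIntegrable f'' volume a b)
    (hab : a ≤ b)
    (c d w : ℝ) (hc : a ≤ c) (hd : d ≤ b) (hcd : c ≤ d) :
    ∫ t in c..d, (t - w)^2/2 * f'' t =
      (d - w)^2/2 * f' d - (c - w)^2/2 * f' c - ((d - w) * f d - (c - w) * f c)
        + ∫ t in c..d, f t := by
  have hsub : Set.uIcc c d ⊆ Set.Icc a b := by
    rw [Set.uIcc_of_le hcd]; exact Set.Icc_subset_Icc hc hd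
  have hu : ∀ x ∈ Set.uIcc c d, HasDerivAt (fun t => (t - w)^2/2) (x - w) x := by
    intro x _
    have h := (((hasDerivAt_id x).sub_const w).pow 2).div_const 2
    exact h.congr_deriv (by simp)
  have hu' : IntervalIntegrable (fun t => t - w) volume c d :=
    (continuous_id.sub continuous_const).intervalIntegrable c d
  have hf''int : IntervalIntegrable f'' volume c d :=
    hint.mono_set (by rw [Set.uIcc_of_le hab]; exact hsub)
  have hf'cont : ContinuousOn f' (Set.uIcc c d) :=
    fun x hx => (hf'' x (hsub hx)).continuousAt.continuousWithinAt
  have hf'int : IntervalIntegrable f' volume c d := hf'cont.intervalIntegrable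
  have step1 := intervalIntegral.integral_mul_deriv_eq_deriv_mul
    hu (fun x hx => hf'' x (hsub hx)) hu' hf''int
  have hone : ∀ x ∈ Set.uIcc c d, HasDerivAt (fun t => t - w) 1 x :=
    fun x _ => (hasDerivAt_id x).sub_const w
  have step2 := intervalIntegral.integral_mul_deriv_eq_deriv_mul
    hone (fun x hx => hf' x (hsub hx)) (intervalIntegrable_const) hf'int
  simp only [one_mul] at step2
  rw [step1, step2]
  ring

section piece
variable {a b s p q : ℝ} {f'' : ℝ → ℝ}

lemma piece_bound (hp : 1 < p) (hq : 1 < q) (hpq : 1/p + 1/q = 1)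
    (hs0 : 0 < s)
    (hconv : SConvexOn s (Set.Icc a b) (fun t => |f'' t| ^ q))
    (hint : IntervalIntegrable f'' volume a b) (hab : a ≤ b)
    (c d w : ℝ) (hc : a ≤ c) (hd : d ≤ b) (hcd : c < d) (hw1 : c ≤ w) (hw2 : w ≤ d) :
    |∫ t in c..d, (t - w)^2/2 * f'' t| ≤
      (∫ t in c..d, ((t - w)^2/2) ^ p) ^ (1/p) *
        ((d - c)/(s + 1) * (|f'' c| ^ q + |f'' d| ^ q)) ^ (1/q) := by
  have hq0 : 0 < q := by linarith
  have hsub : IntervalIntegrable f'' volume c d :=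
    hint.mono_set (by rw [Set.uIcc_of_le hcd.le, Set.uIcc_of_le hab]; exact Set.Icc_subset_Icc hc hd)
  have habs : |∫ t in c..d, (t - w)^2/2 * f'' t| ≤ ∫ t in c..d, |(t - w)^2/2 * f'' t| :=
    intervalIntegral.abs_integral_le_integral_abs hcd.le
  have hcongr : (∫ t in c..d, |(t - w)^2/2 * f'' t|) = ∫ t in c..d, (t - w)^2/2 * |f'' t| :=
    intervalIntegral.integral_congr (fun t _ => by rw [abs_mul, abs_of_nonneg (by positivity)])
  have hmeas : AEStronglyMeasurable (fun t => |f'' t|) (volume.restrict (Set.Ioc c d)) :=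
    continuous_abs.comp_aestronglyMeasurable hsub.1.aestronglyMeasurable
  have hM : ∀ t ∈ Set.Ioc c d, |f'' t| ≤ (|f'' c| ^ q + |f'' d| ^ q) ^ (1/q) := by
    intro t ht
    have h1 := gbd a b s q f'' hq0 hs0 hconv c d hc hd hcd t ⟨ht.1.le, ht.2⟩
    calc |f'' t| = (|f'' t| ^ q) ^ (1/q) := by
          rw [one_div, Real.rpow_rpow_inv (abs_nonneg _) hq0.ne']
      _ ≤ (|f'' c| ^ q + |f'' d| ^ q) ^ (1/q) :=
          Real.rpow_le_rpow (Real.rpow_nonneg (abs_nonneg _) q) h1 (by positivity)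
  have hMφ : ∀ t ∈ Set.Ioc c d, (t - w)^2/2 ≤ (d - c)^2/2 := by
    intro t ht
    nlinarith [ht.1, ht.2]
  have hhold := holder_step c d p q hcd.le hp hpq (fun t => (t - w)^2/2) (fun t => |f'' t|)
    (by continuity) (fun t _ => by positivity) hmeas (fun t => abs_nonneg _)
    ((d - c)^2/2) hMφ _ hM
  have hsc := sconv_int hq0 hs0 hconv hint hab c d hc hd hcd
  have hA : (0:ℝ) ≤ (∫ t in c..d, ((t - w)^2/2) ^ p) ^ (1/p) := by
    apply Real.rpow_nonneg
    apply intervalIntegral.integral_nonneg hcd.le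
    intro t _; positivity
  have hg0 : (0:ℝ) ≤ ∫ t in c..d, |f'' t| ^ q := by
    apply intervalIntegral.integral_nonneg hcd.le
    intro t _; positivity
  calc |∫ t in c..d, (t - w)^2/2 * f'' t| ≤ ∫ t in c..d, (t - w)^2/2 * |f'' t| := by
        rw [← hcongr]; exact habs
    _ ≤ (∫ t in c..d, ((t - w)^2/2) ^ p) ^ (1/p) * (∫ t in c..d, |f'' t| ^ q) ^ (1/q) := hhold
    _ ≤ (∫ t in c..d, ((t - w)^2/2) ^ p) ^ (1/p) *
          ((d - c)/(s + 1) * (|f'' c| ^ q + |f'' d| ^ q)) ^ (1/q) := by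
        apply mul_le_mul_of_nonneg_left _ hA
        exact Real.rpow_le_rpow hg0 hsc (by positivity)
end piece


lemma eexp {p q : ℝ} (hp : 1 < p) (hq : 1 < q) (hpq : 1/p + 1/q = 1) :
    (2*p+1)*(1/p) + 1/q = 3 := by
  have hp0 : p ≠ 0 := by positivity
  have hq0 : q ≠ 0 := by positivity
  field_simp at hpq ⊢
  nlinarith [hpq]

lemma coeff1 {L s p q : ℝ} (hL : 0 < L) (hs : 0 < s) (hp : 1 < p) (hq : 1 < q)
    (hpq : 1/p + 1/q = 1) :
    ((L/4)^(2*p+1)/(2^p*(2*p+1)))^(1/p) * ((L/4)/(s+1))^(1/q)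
      = L^3/(128*(2*p+1)^(1/p)*(s+1)^(1/q)) := by
  have hp0 : (0:ℝ) < p := by linarith
  have hq0 : (0:ℝ) < q := by linarith
  have hk0 : (0:ℝ) < L/4 := by linarith
  have hP : (0:ℝ) < 2*p+1 := by linarith
  have hS : (0:ℝ) < s+1 := by linarith
  have t1 : ((L/4)^(2*p+1)/(2^p*(2*p+1)))^(1/p)
      = (L/4)^((2*p+1)*(1/p)) / (2*(2*p+1)^(1/p)) := by
    rw [Real.div_rpow (by positivity) (by positivity),
      Real.mul_rpow (by positivity) (by positivity),
      ← Real.rpow_mul hk0.le, ← Real.rpow_mul (by norm_num : (0:ℝ) ≤ 2),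
      mul_one_div_cancel (ne_of_gt hp0), Real.rpow_one]
  have t2 : ((L/4)/(s+1))^(1/q) = (L/4)^(1/q)/(s+1)^(1/q) := Real.div_rpow hk0.le hS.le _
  have t3 : (L/4)^((2*p+1)*(1/p)) * (L/4)^(1/q) = (L/4)^(3:ℕ) := by
    rw [← Real.rpow_add hk0, eexp hp hq hpq]
    exact_mod_cast Real.rpow_natCast (L/4) 3
  have hPp : (0:ℝ) < (2*p+1)^(1/p) := Real.rpow_pos_of_pos hP _
  have hSq : (0:ℝ) < (s+1)^(1/q) := Real.rpow_pos_of_pos hS _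
  calc ((L/4)^(2*p+1)/(2^p*(2*p+1)))^(1/p) * ((L/4)/(s+1))^(1/q)
      = ((L/4)^((2*p+1)*(1/p)) * (L/4)^(1/q)) / (2*(2*p+1)^(1/p)*(s+1)^(1/q)) := by
        rw [t1, t2]; ring
    _ = (L/4)^(3:ℕ) / (2*(2*p+1)^(1/p)*(s+1)^(1/q)) := by rw [t3]
    _ = L^3/(128*(2*p+1)^(1/p)*(s+1)^(1/q)) := by
        field_simp
        ring

lemma coeff2 {L s p q : ℝ} (hL : 0 < L) (hs : 0 < s) (hp : 1 < p) (hq : 1 < q)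
    (hpq : 1/p + 1/q = 1) :
    (2*(L/4)^(2*p+1)/(2^p*(2*p+1)))^(1/p) * ((L/2)/(s+1))^(1/q)
      = 2*(L^3/(128*(2*p+1)^(1/p)*(s+1)^(1/q))) := by
  have hk0 : (0:ℝ) < L/4 := by linarith
  have hS : (0:ℝ) < s+1 := by linarith
  have e1 : (2*(L/4)^(2*p+1)/(2^p*(2*p+1)))^(1/p)
      = 2^(1/p) * ((L/4)^(2*p+1)/(2^p*(2*p+1)))^(1/p) := by
    rw [mul_div_assoc, Real.mul_rpow (by norm_num) (by positivity)]
  have e2 : ((L/2)/(s+1))^(1/q) = 2^(1/q) * ((L/4)/(s+1))^(1/q) := by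
    rw [show (L/2)/(s+1) = 2*((L/4)/(s+1)) by ring,
      Real.mul_rpow (by norm_num) (by positivity)]
  rw [e1, e2, show 2^(1/p) * (((L/4)^(2*p+1)/(2^p*(2*p+1)))^(1/p)) * (2^(1/q) * (((L/4)/(s+1))^(1/q)))
      = (2^(1/p) * 2^(1/q)) * ((((L/4)^(2*p+1)/(2^p*(2*p+1)))^(1/p)) * (((L/4)/(s+1))^(1/q))) by ring,
    coeff1 hL hs hp hq hpq, ← Real.rpow_add (by norm_num : (0:ℝ) < 2), hpq, Real.rpow_one]

theorem stmt10 (a b : ℝ) (ha : 0 ≤ a) (hab : a < b) (f f' f'' : ℝ → ℝ)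
    (hf' : ∀ t ∈ Set.Icc a b, HasDerivAt f (f' t) t)
    (hf'' : ∀ t ∈ Set.Icc a b, HasDerivAt f' (f'' t) t)
    (hint : IntervalIntegrable f'' volume a b)
    (s : ℝ) (hs0 : 0 < s) (hs1 : s ≤ 1)
    (p q : ℝ) (hp : 1 < p) (hq : 1 < q) (hpq : 1 / p + 1 / q = 1)
    (hconv : SConvexOn s (Set.Icc a b) (fun t => |f'' t| ^ q)) :
    |((1 / (b - a)) * ∫ t in a..b, f t) - (1 / 2) * (f ((3 * a + b) / 4) + f ((a + 3 * b) / 4))|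
      ≤ (b - a) ^ 2 / (128 * (2 * p + 1) ^ (1 / p) * (s + 1) ^ (1 / q)) *
          ((|f'' a| ^ q + |f'' ((3 * a + b) / 4)| ^ q) ^ (1 / q)
            + 2 * (|f'' ((3 * a + b) / 4)| ^ q + |f'' ((a + 3 * b) / 4)| ^ q) ^ (1 / q)
            + (|f'' ((a + 3 * b) / 4)| ^ q + |f'' b| ^ q) ^ (1 / q)) := by
  have hp0 : (0:ℝ) < p := by linarith
  have hq0 : (0:ℝ) < q := by linarith
  have hba : (0:ℝ) < b - a := sub_pos.2 hab
  have hab' : a ≤ b := hab.le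
  set x1 : ℝ := (3 * a + b) / 4 with hx1
  set x2 : ℝ := (a + 3 * b) / 4 with hx2
  set m : ℝ := (a + b) / 2 with hm
  have hax1 : a < x1 := by rw [hx1]; linarith
  have hx1m : x1 < m := by rw [hx1, hm]; linarith
  have hmx2 : m < x2 := by rw [hm, hx2]; linarith
  have hx2b : x2 < b := by rw [hx2]; linarith
  have hx1b : x1 ≤ b := by linarith
  have hax2 : a ≤ x2 := by linarith
  have ham : a ≤ m := by linarith
  have hmb : m ≤ b := by linarith
  -- integration by parts identities
  have e1 := parts_lemma a b f f' f'' hf' hf'' hint hab' a x1 a le_rfl hx1b hax1.le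
  have e2 := parts_lemma a b f f' f'' hf' hf'' hint hab' x1 m m hax1.le hmb hx1m.le
  have e3 := parts_lemma a b f f' f'' hf' hf'' hint hab' m x2 m ham hx2b.le hmx2.le
  have e4 := parts_lemma a b f f' f'' hf' hf'' hint hab' x2 b b hax2 le_rfl hx2b.le
  -- integrability of f on subintervals
  have hfc : ContinuousOn f (Set.Icc a b) :=
    fun x hx => (hf' x hx).continuousAt.continuousWithinAt
  have fInt : ∀ c d : ℝ, a ≤ c → d ≤ b → c ≤ d → IntervalIntegrable f volume c d := by
    intro c d h1 h2 h3
    exact (hfc.mono (by rw [Set.uIcc_of_le h3]; exact Set.Icc_subset_Icc h1 h2)).intervalIntegrable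
  have hsplit : (∫ t in a..x1, f t) + (∫ t in x1..m, f t) + (∫ t in m..x2, f t)
      + (∫ t in x2..b, f t) = ∫ t in a..b, f t := by
    have s1 := intervalIntegral.integral_add_adjacent_intervals
      (fInt a x1 le_rfl hx1b hax1.le) (fInt x1 m hax1.le hmb hx1m.le)
    have s2 := intervalIntegral.integral_add_adjacent_intervals
      (fInt a m le_rfl hmb ham) (fInt m x2 ham hx2b.le hmx2.le)
    have s3 := intervalIntegral.integral_add_adjacent_intervals
      (fInt a x2 le_rfl hx2b.le hax2) (fInt x2 b hax2 le_rfl hx2b.le)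
    linarith
  -- combine middle pieces
  have hkerc : Continuous fun t : ℝ => (t - m)^2/2 := by continuity
  have kInt : ∀ c d : ℝ, a ≤ c → d ≤ b → c ≤ d →
      IntervalIntegrable (fun t => (t - m)^2/2 * f'' t) volume c d := by
    intro c d h1 h2 h3
    exact (hint.mono_set (by rw [Set.uIcc_of_le h3, Set.uIcc_of_le hab']; exact Set.Icc_subset_Icc h1 h2)).continuousOn_mul hkerc.continuousOn
  have hmidsum := intervalIntegral.integral_add_adjacent_intervals
    (kInt x1 m hax1.le hmb hx1m.le) (kInt m x2 ham hx2b.le hmx2.le)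
  -- the key identity
  have key : (1 / (b - a)) * (∫ t in a..b, f t) - (1 / 2) * (f x1 + f x2)
      = (1 / (b - a)) * ((∫ t in a..x1, (t - a)^2/2 * f'' t)
          + (∫ t in x1..x2, (t - m)^2/2 * f'' t)
          + (∫ t in x2..b, (t - b)^2/2 * f'' t)) := by
    have hs : (∫ t in a..b, f t) = (∫ t in a..x1, (t - a)^2/2 * f'' t)
        + (∫ t in x1..x2, (t - m)^2/2 * f'' t)
        + (∫ t in x2..b, (t - b)^2/2 * f'' t) + (b - a)/2 * (f x1 + f x2) := by
      rw [← hsplit, ← hmidsum, e1, e2, e3, e4, hx1, hm, hx2]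
      ring
    rw [hs]
    field_simp
    ring
  -- piece bounds
  have pb1 := piece_bound hp hq hpq hs0 hconv hint hab' a x1 a le_rfl hx1b hax1
    le_rfl hax1.le
  have pb2 := piece_bound hp hq hpq hs0 hconv hint hab' x1 x2 m hax1.le hx2b.le
    (hx1m.trans hmx2) hx1m.le hmx2.le
  have pb3 := piece_bound hp hq hpq hs0 hconv hint hab' x2 b b hax2 le_rfl hx2b
    hx2b.le le_rfl
  -- kernel integral values
  have hd1 : x1 - a = (b - a)/4 := by rw [hx1]; ring
  have hd2 : x2 - x1 = (b - a)/2 := by rw [hx1, hx2]; ring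
  have hd3 : b - x2 = (b - a)/4 := by rw [hx2]; ring
  have hk1 : (∫ t in a..x1, ((t - a)^2/2) ^ p) = ((b-a)/4)^(2*p+1)/(2^p*(2*p+1)) := by
    rw [kernelA a x1 p hax1.le hp0, hd1]
  have hk3 : (∫ t in x2..b, ((t - b)^2/2) ^ p) = ((b-a)/4)^(2*p+1)/(2^p*(2*p+1)) := by
    have c3 : (∫ t in x2..b, ((t - b)^2/2) ^ p) = ∫ t in x2..b, ((b - t)^2/2) ^ p :=
      intervalIntegral.integral_congr (fun t _ => by rw [show (t-b)^2 = (b-t)^2 by ring])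
    rw [c3, kernelB x2 b p hx2b.le hp0, hd3]
  have hk2 : (∫ t in x1..x2, ((t - m)^2/2) ^ p) = 2*((b-a)/4)^(2*p+1)/(2^p*(2*p+1)) := by
    have hkpc : Continuous fun t : ℝ => ((t - m)^2/2) ^ p :=
      hkerc.rpow_const (fun x => Or.inr hp0.le)
    have hadj := intervalIntegral.integral_add_adjacent_intervals
      (hkpc.intervalIntegrable (μ := volume) x1 m) (hkpc.intervalIntegrable (μ := volume) m x2)
    have c1 : (∫ t in x1..m, ((t - m)^2/2) ^ p) = ∫ t in x1..m, ((m - t)^2/2) ^ p :=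
      intervalIntegral.integral_congr (fun t _ => by rw [show (t-m)^2 = (m-t)^2 by ring])
    have hdm1 : m - x1 = (b - a)/4 := by rw [hx1, hm]; ring
    have hdm2 : x2 - m = (b - a)/4 := by rw [hm, hx2]; ring
    rw [← hadj, c1, kernelB x1 m p hx1m.le hp0, kernelA m x2 p hmx2.le hp0, hdm1, hdm2]
    ring
  rw [hk1, hd1] at pb1
  rw [hk2, hd2] at pb2
  rw [hk3, hd3] at pb3
  -- split the rpow products
  have g1 : (0:ℝ) ≤ |f'' a| ^ q + |f'' x1| ^ q := by positivity
  have g2 : (0:ℝ) ≤ |f'' x1| ^ q + |f'' x2| ^ q := by positivity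
  have g3 : (0:ℝ) ≤ |f'' x2| ^ q + |f'' b| ^ q := by positivity
  have m1 : ((b-a)/4/(s+1) * (|f'' a| ^ q + |f'' x1| ^ q)) ^ (1/q)
      = ((b-a)/4/(s+1)) ^ (1/q) * (|f'' a| ^ q + |f'' x1| ^ q) ^ (1/q) :=
    Real.mul_rpow (by positivity) g1
  have m2 : ((b-a)/2/(s+1) * (|f'' x1| ^ q + |f'' x2| ^ q)) ^ (1/q)
      = ((b-a)/2/(s+1)) ^ (1/q) * (|f'' x1| ^ q + |f'' x2| ^ q) ^ (1/q) :=
    Real.mul_rpow (by positivity) g2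
  have m3 : ((b-a)/4/(s+1) * (|f'' x2| ^ q + |f'' b| ^ q)) ^ (1/q)
      = ((b-a)/4/(s+1)) ^ (1/q) * (|f'' x2| ^ q + |f'' b| ^ q) ^ (1/q) :=
    Real.mul_rpow (by positivity) g3
  rw [m1, ← mul_assoc, coeff1 hba hs0 hp hq hpq] at pb1
  rw [m2, ← mul_assoc, coeff2 hba hs0 hp hq hpq] at pb2
  rw [m3, ← mul_assoc, coeff1 hba hs0 hp hq hpq] at pb3
  -- assemble
  rw [key]
  have habs : |(1 / (b - a)) * ((∫ t in a..x1, (t - a)^2/2 * f'' t)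
      + (∫ t in x1..x2, (t - m)^2/2 * f'' t)
      + (∫ t in x2..b, (t - b)^2/2 * f'' t))|
      ≤ (1 / (b - a)) * (|∫ t in a..x1, (t - a)^2/2 * f'' t|
        + |∫ t in x1..x2, (t - m)^2/2 * f'' t|
        + |∫ t in x2..b, (t - b)^2/2 * f'' t|) := by
    rw [abs_mul, abs_of_pos (by positivity : (0:ℝ) < 1/(b-a))]
    exact mul_le_mul_of_nonneg_left
      ((abs_add_le _ _).trans (add_le_add_left (abs_add_le _ _) _)) (by positivity)
  refine habs.trans ?_
  have hW : (0:ℝ) < 128 * (2*p+1) ^ (1/p) * (s+1) ^ (1/q) := by positivity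
  have step : (1 / (b - a)) * (|∫ t in a..x1, (t - a)^2/2 * f'' t|
        + |∫ t in x1..x2, (t - m)^2/2 * f'' t|
        + |∫ t in x2..b, (t - b)^2/2 * f'' t|)
      ≤ (1 / (b - a)) * ((b-a)^3/(128*(2*p+1)^(1/p)*(s+1)^(1/q))
          * (|f'' a| ^ q + |f'' x1| ^ q) ^ (1/q)
        + 2*((b-a)^3/(128*(2*p+1)^(1/p)*(s+1)^(1/q)))
          * (|f'' x1| ^ q + |f'' x2| ^ q) ^ (1/q)
        + (b-a)^3/(128*(2*p+1)^(1/p)*(s+1)^(1/q))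
          * (|f'' x2| ^ q + |f'' b| ^ q) ^ (1/q)) := by
    apply mul_le_mul_of_nonneg_left _ (by positivity)
    have := pb2
    linarith [pb1, pb2, pb3]
  refine step.trans (le_of_eq ?_)
  field_simp
end

section
/- Let f : [a,b] → ℝ (a < b) be such that f′ is absolutely continuous on [a,b], f″ ∈ L¹[a,b], |f″|^q is s-convex in the second sense on [a,b] for some fixed s ∈ (0,1] with q > 1 and 1/p + 1/q = 1, and f′(a) = f′(b). Then |(1/(b−a))∫_a^b f(t) dt − (f(a)+f(b))/2| ≤ ((b−a)²/(8(2p+1)^{1/p}(s+1)^{1/q}))[|f″(a)|^q + |f″(b)|^q]^{1/q}. -/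
open MeasureTheory

set_option maxHeartbeats 1000000 in
theorem stmt11 (a b : ℝ) (ha : 0 ≤ a) (hab : a < b) (f f' f'' : ℝ → ℝ)
    (hf' : ∀ t ∈ Set.Icc a b, HasDerivAt f (f' t) t)
    (hf'' : ∀ t ∈ Set.Icc a b, HasDerivAt f' (f'' t) t)
    (hint : IntervalIntegrable f'' volume a b)
    (s : ℝ) (hs0 : 0 < s) (hs1 : s ≤ 1)
    (p q : ℝ) (hp : 1 < p) (hq : 1 < q) (hpq : 1 / p + 1 / q = 1)
    (hconv : SConvexOn s (Set.Icc a b) (fun t => |f'' t| ^ q))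
    (hend : f' a = f' b) :
    |((1 / (b - a)) * ∫ t in a..b, f t) - (f a + f b) / 2|
      ≤ (b - a) ^ 2 / (8 * (2 * p + 1) ^ (1 / p) * (s + 1) ^ (1 / q)) *
          (|f'' a| ^ q + |f'' b| ^ q) ^ (1 / q) := by
  have hba : (0:ℝ) < b - a := by linarith
  set c : ℝ := (a + b) / 2 with hc
  set A : ℝ := |f'' a| ^ q with hA
  set B : ℝ := |f'' b| ^ q with hB
  have hA0 : 0 ≤ A := Real.rpow_nonneg (abs_nonneg _) q
  have hB0 : 0 ≤ B := Real.rpow_nonneg (abs_nonneg _) q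
  have huIcc : Set.uIcc a b = Set.Icc a b := Set.uIcc_of_le hab.le
  have hp0 : (0:ℝ) < p := by linarith
  have hq0 : (0:ℝ) < q := by linarith
  -- continuity facts
  have hfcont : ContinuousOn f (Set.Icc a b) := fun t ht =>
    (hf' t ht).continuousAt.continuousWithinAt
  have hf'cont : ContinuousOn f' (Set.Icc a b) := fun t ht =>
    (hf'' t ht).continuousAt.continuousWithinAt
  have hintf : IntervalIntegrable f volume a b := by
    apply ContinuousOn.intervalIntegrable; rwa [huIcc]
  have hintf' : IntervalIntegrable f' volume a b := by
    apply ContinuousOn.intervalIntegrable; rwa [huIcc]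
  -- Step 1: the identity
  have hI : ((1 / (b - a)) * ∫ t in a..b, f t) - (f a + f b) / 2
      = (∫ t in a..b, (t - c) ^ 2 * f'' t) / (2 * (b - a)) := by
    have hu1 : ∀ x ∈ Set.uIcc a b, HasDerivAt (fun t => (t - c) ^ 2) (2 * (x - c)) x := by
      intro x _
      have h1 : HasDerivAt (fun t : ℝ => t - c) 1 x := (hasDerivAt_id x).sub_const c
      simpa using h1.fun_pow 2
    have ibp1 : ∫ t in a..b, (t - c) ^ 2 * f'' t
        = (b - c) ^ 2 * f' b - (a - c) ^ 2 * f' a - ∫ t in a..b, (2 * (t - c)) * f' t :=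
      intervalIntegral.integral_mul_deriv_eq_deriv_mul hu1
        (fun x hx => hf'' x (huIcc ▸ hx))
        (by apply Continuous.intervalIntegrable; continuity) hint
    have ibp2 : ∫ t in a..b, (t - c) * f' t
        = (b - c) * f b - (a - c) * f a - ∫ t in a..b, 1 * f t :=
      intervalIntegral.integral_mul_deriv_eq_deriv_mul
        (fun x _ => (hasDerivAt_id x).sub_const c)
        (fun x hx => hf' x (huIcc ▸ hx))
        (by apply Continuous.intervalIntegrable; continuity) hintf'
    have h2 : ∫ t in a..b, (2 * (t - c)) * f' t = 2 * ∫ t in a..b, (t - c) * f' t := by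
      rw [← intervalIntegral.integral_const_mul]
      congr 1; funext t; ring
    simp only [one_mul] at ibp2
    have key : ∫ t in a..b, (t - c) ^ 2 * f'' t
        = 2 * (∫ t in a..b, f t) - (b - a) * (f a + f b) := by
      rw [ibp1, h2, ibp2, hend, hc]; ring
    rw [key]; field_simp
  rw [hI]
  -- pointwise s-convexity bound
  have hptw : ∀ t ∈ Set.Icc a b, |f'' t| ^ q ≤ ((b - t)/(b - a)) ^ s * A + ((t - a)/(b - a)) ^ s * B := by
    intro t ht
    have hα : 0 ≤ (b - t)/(b - a) := div_nonneg (by linarith [ht.2]) hba.le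
    have hβ : 0 ≤ (t - a)/(b - a) := div_nonneg (by linarith [ht.1]) hba.le
    have hsum : (b - t)/(b - a) + (t - a)/(b - a) = 1 := by field_simp; ring
    have ht' : (b - t)/(b - a) * a + (t - a)/(b - a) * b = t := by field_simp; ring
    have := hconv a ⟨le_refl a, hab.le⟩ b ⟨hab.le, le_refl b⟩ _ _ hα hβ hsum
    rw [ht'] at this
    exact this
  have hbd : ∀ t ∈ Set.Icc a b, |f'' t| ^ q ≤ A + B := by
    intro t ht
    have h1 : ((b - t)/(b - a)) ^ s ≤ 1 :=
      Real.rpow_le_one (div_nonneg (by linarith [ht.2]) hba.le)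
        (by rw [div_le_one hba]; linarith [ht.1]) hs0.le
    have h2 : ((t - a)/(b - a)) ^ s ≤ 1 :=
      Real.rpow_le_one (div_nonneg (by linarith [ht.1]) hba.le)
        (by rw [div_le_one hba]; linarith [ht.2]) hs0.le
    have := hptw t ht
    nlinarith [Real.rpow_nonneg (div_nonneg (show (0:ℝ) ≤ b - t by linarith [ht.2]) hba.le) s,
      Real.rpow_nonneg (div_nonneg (show (0:ℝ) ≤ t - a by linarith [ht.1]) hba.le) s]
  haveI hfin : IsFiniteMeasure (volume.restrict (Set.Ioc a b)) :=
    ⟨by rw [Measure.restrict_apply_univ]; exact measure_Ioc_lt_top⟩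
  have hf''meas : AEStronglyMeasurable f'' (volume.restrict (Set.Ioc a b)) :=
    hint.1.aestronglyMeasurable
  have habsmeas : AEStronglyMeasurable (fun t => |f'' t|) (volume.restrict (Set.Ioc a b)) := by
    simpa [Real.norm_eq_abs] using hf''meas.norm
  -- Step 2: Hölder
  have hHolder : |∫ t in a..b, (t - c) ^ 2 * f'' t| ≤
      (∫ t in Set.Ioc a b, ((t - c) ^ 2) ^ p) ^ (1/p) *
      (∫ t in Set.Ioc a b, |f'' t| ^ q) ^ (1/q) := by
    have habs : |∫ t in a..b, (t - c) ^ 2 * f'' t| ≤ ∫ t in a..b, |(t - c) ^ 2 * f'' t| :=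
      intervalIntegral.abs_integral_le_integral_abs hab.le
    have heq : (∫ t in a..b, |(t - c) ^ 2 * f'' t|) = ∫ t in Set.Ioc a b, (t - c) ^ 2 * |f'' t| := by
      rw [intervalIntegral.integral_of_le hab.le]
      refine integral_congr_ae (Filter.Eventually.of_forall fun t => ?_)
      simp [abs_mul, abs_pow, sq_abs]
    have hpq' : Real.HolderConjugate p q :=
      Real.holderConjugate_iff.mpr ⟨hp, by rw [← one_div, ← one_div]; exact hpq⟩
    have hkerMem : MemLp (fun t : ℝ => (t - c) ^ 2) (ENNReal.ofReal p)
        (volume.restrict (Set.Ioc a b)) := by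
      refine MemLp.of_bound ((Continuous.aestronglyMeasurable (by continuity))) ((b - a) ^ 2) ?_
      refine ae_restrict_of_forall_mem measurableSet_Ioc fun t ht => ?_
      rw [Real.norm_eq_abs, abs_of_nonneg (sq_nonneg _), hc]
      nlinarith [ht.1, ht.2]
    have hfabsMem : MemLp (fun t => |f'' t|) (ENNReal.ofReal q)
        (volume.restrict (Set.Ioc a b)) := by
      refine MemLp.of_bound habsmeas ((A + B) ^ (1/q)) ?_
      refine ae_restrict_of_forall_mem measurableSet_Ioc fun t ht => ?_
      rw [Real.norm_eq_abs, abs_abs]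
      have h1 : |f'' t| = (|f'' t| ^ q) ^ (1/q) := by
        rw [← Real.rpow_mul (abs_nonneg _), mul_one_div_cancel hq0.ne', Real.rpow_one]
      rw [h1]
      exact Real.rpow_le_rpow (Real.rpow_nonneg (abs_nonneg _) q)
        (hbd t ⟨ht.1.le, ht.2⟩) (by positivity)
    have hH := MeasureTheory.integral_mul_le_Lp_mul_Lq_of_nonneg hpq'
      (Filter.Eventually.of_forall fun t => sq_nonneg (t - c))
      (Filter.Eventually.of_forall fun t => abs_nonneg (f'' t))
      hkerMem hfabsMem
    calc |∫ t in a..b, (t - c) ^ 2 * f'' t| ≤ ∫ t in a..b, |(t - c) ^ 2 * f'' t| := habs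
      _ = ∫ t in Set.Ioc a b, (t - c) ^ 2 * |f'' t| := heq
      _ ≤ _ := hH
  -- Step 3: kernel integral value
  have hker : (∫ t in Set.Ioc a b, ((t - c) ^ 2) ^ p)
      = (b - a) ^ (2*p+1) / (2 ^ (2*p) * (2*p+1)) := by
    have h2p : (0:ℝ) < 2 * p := by linarith
    have hcontr : Continuous fun u : ℝ => |u| ^ (2*p) := by
      have h1 : Continuous fun x : ℝ => x ^ (2*p) :=
        continuous_iff_continuousAt.2 fun x =>
          Real.continuousAt_rpow_const x (2*p) (Or.inr h2p.le)
      exact h1.comp continuous_abs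
    have hrw : (∫ t in Set.Ioc a b, ((t - c) ^ 2) ^ p) = ∫ t in a..b, |t - c| ^ (2*p) := by
      rw [← intervalIntegral.integral_of_le hab.le]
      refine intervalIntegral.integral_congr fun t _ => ?_
      rw [← sq_abs, ← Real.rpow_natCast |t - c| 2, ← Real.rpow_mul (abs_nonneg _)]
      norm_num
    rw [hrw]
    have hsub : (∫ t in a..b, |t - c| ^ (2*p))
        = ∫ u in (-(( b - a)/2))..((b - a)/2), |u| ^ (2*p) := by
      have := intervalIntegral.integral_comp_sub_right (fun u => |u| ^ (2*p)) c
        (a := a) (b := b)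
      rw [this]
      congr 1 <;> rw [hc] <;> ring
    rw [hsub]
    set h : ℝ := (b - a)/2 with hh
    have hhpos : 0 < h := by rw [hh]; linarith
    have hsplit : (∫ u in (-h)..h, |u| ^ (2*p))
        = (∫ u in (-h)..(0:ℝ), |u| ^ (2*p)) + ∫ u in (0:ℝ)..h, |u| ^ (2*p) :=
      (intervalIntegral.integral_add_adjacent_intervals
        (hcontr.intervalIntegrable _ _) (hcontr.intervalIntegrable _ _)).symm
    have hneg : (∫ u in (-h)..(0:ℝ), |u| ^ (2*p)) = ∫ u in (0:ℝ)..h, |u| ^ (2*p) := by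
      have := intervalIntegral.integral_comp_neg (fun u : ℝ => |u| ^ (2*p))
        (a := (0:ℝ)) (b := h)
      simp only [abs_neg, neg_zero] at this
      rw [← this]
    have hpos : (∫ u in (0:ℝ)..h, |u| ^ (2*p)) = h ^ (2*p+1) / (2*p+1) := by
      have hcongr : (∫ u in (0:ℝ)..h, |u| ^ (2*p)) = ∫ u in (0:ℝ)..h, u ^ (2*p) := by
        refine intervalIntegral.integral_congr fun u hu => ?_
        rw [Set.uIcc_of_le hhpos.le] at hu
        rw [abs_of_nonneg hu.1]
      rw [hcongr, integral_rpow (Or.inl (by linarith))]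
      rw [Real.zero_rpow (by positivity)]
      ring
    rw [hsplit, hneg, hpos, hh]
    have he1 : ((b - a)/2) ^ (2*p+1) = (b - a) ^ (2*p+1) / 2 ^ (2*p+1) :=
      Real.div_rpow hba.le (by norm_num : (0:ℝ) ≤ 2) (2*p+1)
    have he2 : (2:ℝ) ^ (2*p+1) = 2 ^ (2*p) * 2 := by
      rw [Real.rpow_add two_pos, Real.rpow_one]
    rw [he1, he2]
    have : (0:ℝ) < 2 ^ (2*p) := Real.rpow_pos_of_pos two_pos _
    field_simp
    ring
  -- Step 4: convexity integral bound
  have hconts : Continuous fun x : ℝ => x ^ s :=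
    continuous_iff_continuousAt.2 fun x =>
      Real.continuousAt_rpow_const x s (Or.inr hs0.le)
  have hconvint : (∫ t in Set.Ioc a b, |f'' t| ^ q) ≤ (b - a) * (A + B) / (s + 1) := by
    have hc1 : Continuous fun t : ℝ => ((b - t)/(b - a)) ^ s :=
      hconts.comp (by continuity)
    have hc2 : Continuous fun t : ℝ => ((t - a)/(b - a)) ^ s :=
      hconts.comp (by continuity)
    have hintq : IntervalIntegrable (fun t => |f'' t| ^ q) volume a b := by
      rw [intervalIntegrable_iff_integrableOn_Ioc_of_le hab.le]
      have hcq : Continuous fun x : ℝ => x ^ q :=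
        continuous_iff_continuousAt.2 fun x =>
          Real.continuousAt_rpow_const x q (Or.inr hq0.le)
      refine Integrable.mono' (integrable_const (A + B))
        (hcq.comp_aestronglyMeasurable habsmeas) ?_
      refine ae_restrict_of_forall_mem measurableSet_Ioc fun t ht => ?_
      rw [Real.norm_of_nonneg (Real.rpow_nonneg (abs_nonneg _) q)]
      exact hbd t ⟨ht.1.le, ht.2⟩
    have hmono := intervalIntegral.integral_mono_on hab.le hintq
      (((hc1.mul continuous_const).add (hc2.mul continuous_const)).intervalIntegrable a b)
      (fun t ht => hptw t ht)
    have hi1 : (∫ t in a..b, ((t - a)/(b - a)) ^ s) = (b - a) / (s + 1) := by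
      have h1 := intervalIntegral.integral_comp_sub_right (a := a) (b := b)
        (fun u => (u/(b - a)) ^ s) a
      rw [h1, show a - a = (0:ℝ) by ring]
      rw [intervalIntegral.integral_comp_div (a := (0:ℝ)) (b := b - a)
        (f := fun x => x ^ s) hba.ne']
      rw [zero_div, div_self hba.ne', smul_eq_mul,
        integral_rpow (Or.inl (by linarith : (-1:ℝ) < s)), Real.one_rpow,
        Real.zero_rpow (by positivity)]
      ring
    have hi2 : (∫ t in a..b, ((b - t)/(b - a)) ^ s) = (b - a) / (s + 1) := by
      have h1 := intervalIntegral.integral_comp_sub_left (a := a) (b := b)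
        (fun u => (u/(b - a)) ^ s) b
      rw [h1, show b - b = (0:ℝ) by ring]
      rw [intervalIntegral.integral_comp_div (a := (0:ℝ)) (b := b - a)
        (f := fun x => x ^ s) hba.ne']
      rw [zero_div, div_self hba.ne', smul_eq_mul,
        integral_rpow (Or.inl (by linarith : (-1:ℝ) < s)), Real.one_rpow,
        Real.zero_rpow (by positivity)]
      ring
    have hsum : (∫ t in a..b, (((b - t)/(b - a)) ^ s * A + ((t - a)/(b - a)) ^ s * B))
        = (b - a)/(s + 1) * A + (b - a)/(s + 1) * B := by
      rw [intervalIntegral.integral_add (f := fun t => ((b - t)/(b - a)) ^ s * A)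
          (g := fun t => ((t - a)/(b - a)) ^ s * B)
          ((hc1.mul continuous_const).intervalIntegrable a b)
          ((hc2.mul continuous_const).intervalIntegrable a b),
        intervalIntegral.integral_mul_const, intervalIntegral.integral_mul_const,
        hi1, hi2]
    rw [← intervalIntegral.integral_of_le hab.le]
    calc (∫ t in a..b, |f'' t| ^ q)
        ≤ ∫ t in a..b, (((b - t)/(b - a)) ^ s * A + ((t - a)/(b - a)) ^ s * B) := hmono
      _ = (b - a)/(s + 1) * A + (b - a)/(s + 1) * B := hsum
      _ = (b - a) * (A + B) / (s + 1) := by ring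
  -- Step 5: assemble
  rw [hker] at hHolder
  have hK0 : 0 ≤ ∫ t in Set.Ioc a b, |f'' t| ^ q :=
    setIntegral_nonneg measurableSet_Ioc fun t _ => Real.rpow_nonneg (abs_nonneg _) q
  have h2 : (∫ t in Set.Ioc a b, |f'' t| ^ q) ^ (1/q)
      ≤ ((b - a) * (A + B) / (s + 1)) ^ (1/q) :=
    Real.rpow_le_rpow hK0 hconvint (by positivity)
  have hJ0 : (0:ℝ) ≤ ((b - a) ^ (2*p+1) / (2 ^ (2*p) * (2*p+1))) ^ (1/p) := by positivity
  have hstep : |∫ t in a..b, (t - c) ^ 2 * f'' t|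
      ≤ ((b - a) ^ (2*p+1) / (2 ^ (2*p) * (2*p+1))) ^ (1/p)
        * ((b - a) * (A + B) / (s + 1)) ^ (1/q) :=
    hHolder.trans (mul_le_mul_of_nonneg_left h2 hJ0)
  have hpp : (0:ℝ) < (2*p+1) ^ (1/p) := Real.rpow_pos_of_pos (by linarith) _
  have hss : (0:ℝ) < (s+1) ^ (1/q) := Real.rpow_pos_of_pos (by linarith) _
  have h4 : (2:ℝ) ^ (2:ℝ) = 4 := by
    have := Real.rpow_natCast (2:ℝ) 2
    norm_num at this
    linarith [this]
  have e1 : ((b - a) ^ (2*p+1) / (2 ^ (2*p) * (2*p+1))) ^ (1/p)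
      = (b - a) ^ ((2*p+1)*(1/p)) / (4 * (2*p+1) ^ (1/p)) := by
    rw [Real.div_rpow (by positivity) (by positivity) (1/p),
      Real.mul_rpow (by positivity) (by positivity),
      ← Real.rpow_mul hba.le, ← Real.rpow_mul (by norm_num : (0:ℝ) ≤ 2),
      show (2:ℝ)*p*(1/p) = 2 by field_simp, h4]
  have e2 : ((b - a) * (A + B) / (s + 1)) ^ (1/q)
      = (b - a) ^ (1/q) * (A + B) ^ (1/q) / (s + 1) ^ (1/q) := by
    rw [Real.div_rpow (by positivity) (by positivity) (1/q),
      Real.mul_rpow hba.le (by positivity)]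
  have e3 : (b - a) ^ ((2*p+1)*(1/p)) * (b - a) ^ (1/q) = (b - a) ^ (3:ℕ) := by
    rw [← Real.rpow_add hba]
    have hP : (2*p+1)*(1/p) = 2 + 1/p := by field_simp
    rw [show (2*p+1)*(1/p) + 1/q = 3 by rw [hP]; linarith,
      show (3:ℝ) = ((3:ℕ):ℝ) by norm_num, Real.rpow_natCast]
  have efinal : ((b - a) ^ (2*p+1) / (2 ^ (2*p) * (2*p+1))) ^ (1/p)
        * ((b - a) * (A + B) / (s + 1)) ^ (1/q)
      = ((b - a) ^ 2 / (8 * (2 * p + 1) ^ (1 / p) * (s + 1) ^ (1 / q)) * (A + B) ^ (1/q))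
        * (2 * (b - a)) := by
    rw [e1, e2]
    rw [show (b - a) ^ ((2*p+1)*(1/p)) / (4 * (2*p+1) ^ (1/p)) *
        ((b - a) ^ (1/q) * (A + B) ^ (1/q) / (s + 1) ^ (1/q))
      = ((b - a) ^ ((2*p+1)*(1/p)) * (b - a) ^ (1/q)) * (A + B) ^ (1/q)
        / (4 * (2*p+1) ^ (1/p) * (s + 1) ^ (1/q)) by ring]
    rw [e3]
    field_simp
    ring
  rw [abs_div, abs_of_pos (show (0:ℝ) < 2*(b - a) by linarith),
    div_le_iff₀ (show (0:ℝ) < 2*(b - a) by linarith)]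
  calc |∫ t in a..b, (t - c) ^ 2 * f'' t|
      ≤ ((b - a) ^ (2*p+1) / (2 ^ (2*p) * (2*p+1))) ^ (1/p)
        * ((b - a) * (A + B) / (s + 1)) ^ (1/q) := hstep
    _ = _ := efinal
end

section
/- Let f : [a,b] → ℝ (a < b) be such that f′ is absolutely continuous on [a,b], f″ ∈ L¹[a,b], and |f″|^q is s-concave in the second sense on [a,b] for some fixed s ∈ (0,1], where q > 1 and 1/p + 1/q = 1. If x ∈ [a, (a+b)/2] satisfies f′(x) = f′(a+b−x), then |(1/(b−a))∫_a^b f(t) dt − (1/2)[f(x)+f(a+b−x)]| ≤ (2^{(s−1)/q}/(2(b−a)(2p+1)^{1/p}))[(x−a)³(|f″((x+a)/2)| + |f″((a+2b−x)/2)|) + ((a+b−2x)³/4)|f″((a+b)/2)|]. -/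
open MeasureTheory

def SConcaveOn (s : ℝ) (D : Set ℝ) (g : ℝ → ℝ) : Prop :=
  ∀ x ∈ D, ∀ y ∈ D, ∀ α β : ℝ, 0 ≤ α → 0 ≤ β → α + β = 1 →
    α ^ s * g x + β ^ s * g y ≤ g (α * x + β * y)

lemma aux_ibp (f f' f'' : ℝ → ℝ) (u v w : ℝ) (huv : u ≤ v)
    (hf' : ∀ t ∈ Set.Icc u v, HasDerivAt f (f' t) t)
    (hf'' : ∀ t ∈ Set.Icc u v, HasDerivAt f' (f'' t) t)
    (hint : IntervalIntegrable f'' volume u v) :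
    ∫ t in u..v, (t - w) ^ 2 / 2 * f'' t
      = (v - w) ^ 2 / 2 * f' v - (u - w) ^ 2 / 2 * f' u
        - ((v - w) * f v - (u - w) * f u) + ∫ t in u..v, f t := by
  have huIcc : Set.uIcc u v = Set.Icc u v := Set.uIcc_of_le huv
  have hK : ∀ t ∈ Set.uIcc u v, HasDerivAt (fun t => (t - w) ^ 2 / 2) (t - w) t := by
    intro t _
    have h := (((hasDerivAt_id t).sub_const w).pow 2).div_const 2
    exact h.congr_deriv (by simp only [id, Nat.cast_ofNat]; ring)
  have hKd : IntervalIntegrable (fun t => t - w) volume u v :=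
    (continuous_id.sub continuous_const).intervalIntegrable _ _
  have hcf : ContinuousOn f (Set.uIcc u v) := fun t ht =>
    (hf' t (huIcc ▸ ht)).continuousAt.continuousWithinAt
  have hcf' : ContinuousOn f' (Set.uIcc u v) := fun t ht =>
    (hf'' t (huIcc ▸ ht)).continuousAt.continuousWithinAt
  have h1 := intervalIntegral.integral_mul_deriv_eq_deriv_mul hK
      (fun t ht => hf'' t (huIcc ▸ ht)) hKd hint
  have h2 := intervalIntegral.integral_mul_deriv_eq_deriv_mul
      (u := fun t => t - w) (u' := fun _ => (1:ℝ)) (v := f) (v' := f')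
      (fun t _ => (hasDerivAt_id t).sub_const w)
      (fun t ht => hf' t (huIcc ▸ ht))
      ((continuous_const : Continuous fun _ : ℝ => (1:ℝ)).intervalIntegrable _ _)
      (hcf'.intervalIntegrable)
  rw [h1, h2]
  simp only [one_mul]
  ring

-- boundedness: g t ≤ 2 g((a+b)/2) on Icc a b
lemma aux_bdd (g : ℝ → ℝ) (s a b : ℝ) (hab : a < b) (hs0 : 0 < s) (hs1 : s ≤ 1)
    (hg0 : ∀ t, 0 ≤ g t) (hconc : SConcaveOn s (Set.Icc a b) g) :
    ∀ t ∈ Set.Icc a b, g t ≤ 2 * g ((a + b) / 2) := by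
  intro t ht
  set m := (a + b) / 2 with hm
  have hm_mem : m ∈ Set.Icc a b := ⟨by simp [hm]; linarith, by simp [hm]; linarith⟩
  rcases le_total t m with htm | htm
  · -- m = λ t + (1-λ) b, λ = (b-m)/(b-t)
    have hbt : 0 < b - t := by simp [hm] at htm ⊢; linarith
    set l : ℝ := (b - m) / (b - t) with hl
    have hl_half : 1/2 ≤ l := by
      rw [hl, le_div_iff₀ hbt]; simp [hm]; linarith [ht.1]
    have hl1 : l ≤ 1 := by
      rw [hl, div_le_one hbt]; linarith
    have hcomb : l * t + (1 - l) * b = m := by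
      rw [hl]; field_simp; ring
    have := hconc t ht b ⟨hab.le, le_refl b⟩ l (1 - l) (by linarith) (by linarith) (by ring)
    rw [hcomb] at this
    have hls : l ≤ l ^ s := by
      calc l = l ^ (1:ℝ) := (Real.rpow_one l).symm
        _ ≤ l ^ s := Real.rpow_le_rpow_of_exponent_ge (by linarith) hl1 hs1
    have h1 : (1/2 : ℝ) * g t ≤ l ^ s * g t :=
      mul_le_mul_of_nonneg_right (le_trans hl_half hls) (hg0 t)
    have h2 : (0:ℝ) ≤ (1 - l) ^ s * g b :=
      mul_nonneg (Real.rpow_nonneg (by linarith) s) (hg0 b)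
    linarith
  · have hta : 0 < t - a := by simp [hm] at htm ⊢; linarith
    set l : ℝ := (m - a) / (t - a) with hl
    have hl_half : 1/2 ≤ l := by
      rw [hl, le_div_iff₀ hta]; simp [hm]; linarith [ht.2]
    have hl1 : l ≤ 1 := by
      rw [hl, div_le_one hta]; linarith
    have hcomb : l * t + (1 - l) * a = m := by
      rw [hl]; field_simp; ring
    have := hconc t ht a ⟨le_refl a, hab.le⟩ l (1 - l) (by linarith) (by linarith) (by ring)
    rw [hcomb] at this
    have hls : l ≤ l ^ s := by
      calc l = l ^ (1:ℝ) := (Real.rpow_one l).symm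
        _ ≤ l ^ s := Real.rpow_le_rpow_of_exponent_ge (by linarith) hl1 hs1
    have h1 : (1/2 : ℝ) * g t ≤ l ^ s * g t :=
      mul_le_mul_of_nonneg_right (le_trans hl_half hls) (hg0 t)
    have h2 : (0:ℝ) ≤ (1 - l) ^ s * g a :=
      mul_nonneg (Real.rpow_nonneg (by linarith) s) (hg0 a)
    linarith

-- HH-type: ∫ g ≤ 2^(s-1) (v-u) g(mid)
lemma aux_hh (g : ℝ → ℝ) (s a b : ℝ) (hs0 : 0 < s) (hs1 : s ≤ 1)
    (hconc : SConcaveOn s (Set.Icc a b) g)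
    (u v : ℝ) (hau : a ≤ u) (huv : u ≤ v) (hvb : v ≤ b)
    (hgi : IntervalIntegrable g volume u v) :
    ∫ t in u..v, g t ≤ 2 ^ (s - 1) * (v - u) * g ((u + v) / 2) := by
  have h2s : (0:ℝ) < 2 ^ s := Real.rpow_pos_of_pos two_pos s
  have key : ∀ t ∈ Set.Icc u v, g t + g (u + v - t) ≤ 2 ^ s * g ((u + v) / 2) := by
    intro t ht
    have h1 : t ∈ Set.Icc a b := ⟨hau.trans ht.1, ht.2.trans hvb⟩
    have h2 : u + v - t ∈ Set.Icc a b :=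
      ⟨le_trans hau (by linarith [ht.2]), le_trans (by linarith [ht.1] : u + v - t ≤ v) hvb⟩
    have hc := hconc t h1 (u + v - t) h2 (1/2) (1/2) (by norm_num) (by norm_num) (by norm_num)
    have hmid : (1:ℝ)/2 * t + 1/2 * (u + v - t) = (u + v)/2 := by ring
    rw [hmid] at hc
    have hhalf : ((1:ℝ)/2) ^ s = ((2:ℝ) ^ s)⁻¹ := by
      rw [one_div, Real.inv_rpow (by norm_num : (0:ℝ) ≤ 2)]
    rw [hhalf] at hc
    have hcc : (2:ℝ) ^ s * ((2 ^ s)⁻¹) = 1 := mul_inv_cancel₀ (ne_of_gt h2s)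
    calc g t + g (u + v - t)
        = 2 ^ s * ((2 ^ s)⁻¹ * g t + (2 ^ s)⁻¹ * g (u + v - t)) := by
          rw [mul_add, ← mul_assoc, ← mul_assoc, hcc, one_mul, one_mul]
      _ ≤ 2 ^ s * g ((u + v) / 2) := mul_le_mul_of_nonneg_left hc h2s.le
  have hrefl : IntervalIntegrable (fun t => g (u + v - t)) volume u v := by
    have := hgi.comp_sub_left (u + v)
    simpa using this.symm
  have hint2 : (∫ t in u..v, g (u + v - t)) = ∫ t in u..v, g t := by
    rw [intervalIntegral.integral_comp_sub_left g (u + v)]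
    norm_num
  have hmono : (∫ t in u..v, (g t + g (u + v - t)))
      ≤ ∫ t in u..v, (2 ^ s * g ((u + v) / 2) : ℝ) := by
    apply intervalIntegral.integral_mono_on huv (hgi.add hrefl)
      (intervalIntegrable_const)
    exact key
  rw [intervalIntegral.integral_add hgi hrefl, hint2,
    intervalIntegral.integral_const] at hmono
  have h2s1 : (2:ℝ) ^ (s - 1) = 2 ^ s / 2 := by
    rw [Real.rpow_sub two_pos, Real.rpow_one]
  rw [h2s1]
  have : (v - u) • (2 ^ s * g ((u + v) / 2)) = (v - u) * (2 ^ s * g ((u + v) / 2)) := by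
    simp [smul_eq_mul]
  rw [this] at hmono
  nlinarith [hmono]

lemma aux_holder (p q : ℝ) (hp : 1 < p) (hpq : 1/p + 1/q = 1)
    (K h : ℝ → ℝ) (u v : ℝ) (huv : u ≤ v)
    (hK : Continuous K) (hKnn : ∀ t, 0 ≤ K t)
    (hmeas : AEStronglyMeasurable h (volume.restrict (Set.Ioc u v)))
    (hnn : ∀ t, 0 ≤ h t)
    (C : ℝ) (hbd : ∀ t ∈ Set.Ioc u v, h t ≤ C) :
    ∫ t in u..v, K t * h t
      ≤ (∫ t in u..v, K t ^ p) ^ (1/p) * (∫ t in u..v, h t ^ q) ^ (1/q) := by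
  haveI : IsFiniteMeasure (volume.restrict (Set.Ioc u v)) :=
    ⟨by rw [Measure.restrict_apply_univ]; exact measure_Ioc_lt_top⟩
  have hq' : Real.HolderConjugate p q := Real.holderConjugate_iff.mpr ⟨hp, by rw [← one_div, ← one_div]; exact hpq⟩
  obtain ⟨D, hD⟩ := (isCompact_Icc (a := u) (b := v)).exists_bound_of_continuousOn
    hK.continuousOn
  have hKmem : MemLp K (ENNReal.ofReal p) (volume.restrict (Set.Ioc u v)) :=
    MemLp.of_bound hK.aestronglyMeasurable D
      (ae_restrict_of_forall_mem measurableSet_Ioc fun t ht =>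
        hD t (Set.Ioc_subset_Icc_self ht))
  have hhmem : MemLp h (ENNReal.ofReal q) (volume.restrict (Set.Ioc u v)) :=
    MemLp.of_bound hmeas C
      (ae_restrict_of_forall_mem measurableSet_Ioc fun t ht => by
        rw [Real.norm_of_nonneg (hnn t)]; exact hbd t ht)
  have := MeasureTheory.integral_mul_le_Lp_mul_Lq_of_nonneg hq'
    (Filter.Eventually.of_forall hKnn) (Filter.Eventually.of_forall hnn) hKmem hhmem
  rw [intervalIntegral.integral_of_le huv, intervalIntegral.integral_of_le huv,
    intervalIntegral.integral_of_le huv]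
  exact this

lemma aux_kint (p : ℝ) (hp : 1 < p) (c d : ℝ) (hcd : c ≤ d) :
    ∫ t in c..d, ((t - c) ^ 2 / 2) ^ p
      = (d - c) ^ (2 * p + 1) / (2 * p + 1) / 2 ^ p := by
  have h2p1 : (0:ℝ) < 2 * p + 1 := by linarith
  have h1 : Set.EqOn (fun t => ((t - c) ^ 2 / 2) ^ p)
      (fun t => (fun y => y ^ (2 * p)) (t - c) / 2 ^ p) (Set.uIcc c d) := by
    intro t ht
    rw [Set.uIcc_of_le hcd] at ht
    have htc : (0:ℝ) ≤ t - c := by linarith [ht.1]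
    simp only
    rw [Real.div_rpow (sq_nonneg _) (by norm_num : (0:ℝ) ≤ 2)]
    congr 1
    rw [← Real.rpow_natCast (t - c) 2, ← Real.rpow_mul htc]
    norm_num
  rw [intervalIntegral.integral_congr h1]
  have h2 : (∫ t in c..d, (fun y => y ^ (2 * p)) (t - c) / 2 ^ p)
      = (∫ t in c..d, (fun y => y ^ (2 * p)) (t - c)) / 2 ^ p := by
    rw [intervalIntegral.integral_div]
  rw [h2, intervalIntegral.integral_comp_sub_right (fun y => y ^ (2 * p)) c, sub_self]
  rw [integral_rpow (Or.inl (by linarith : (-1:ℝ) < 2 * p))]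
  rw [Real.zero_rpow (by linarith : 2 * p + 1 ≠ 0)]
  ring

lemma aux_kint' (p : ℝ) (hp : 1 < p) (c d : ℝ) (hcd : c ≤ d) :
    ∫ t in c..d, ((t - d) ^ 2 / 2) ^ p
      = (d - c) ^ (2 * p + 1) / (2 * p + 1) / 2 ^ p := by
  have h1 : Set.EqOn (fun t => ((t - d) ^ 2 / 2) ^ p)
      (fun t => (fun y => (y ^ 2 / 2) ^ p) (d - t)) (Set.uIcc c d) := by
    intro t _
    simp only
    rw [← neg_sub t d, neg_pow, neg_one_sq, one_mul]  -- (d-t)^2 = (t-d)^2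
  rw [intervalIntegral.integral_congr h1,
    intervalIntegral.integral_comp_sub_left (fun y => (y ^ 2 / 2) ^ p) d, sub_self]
  have := aux_kint p hp 0 (d - c) (by linarith)
  simpa using this

lemma aux_simp1 (p q s X A : ℝ) (hp : 1 < p) (hq : 1 < q) (hpq : 1/p + 1/q = 1)
    (hX : 0 ≤ X) (hA : 0 ≤ A) :
    (X ^ (2*p+1) / (2*p+1) / 2 ^ p) ^ (1/p) * (2 ^ (s-1) * X * A ^ q) ^ (1/q)
      = 2 ^ ((s-1)/q) / (2 * (2*p+1) ^ (1/p)) * (X ^ 3 * A) := by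
  have hp0 : (0:ℝ) < p := by linarith
  have hq0 : (0:ℝ) < q := by linarith
  have h2p1 : (0:ℝ) < 2*p+1 := by linarith
  have hXp : (0:ℝ) ≤ X ^ (2*p+1) := Real.rpow_nonneg hX _
  have h2s : (0:ℝ) ≤ (2:ℝ) ^ (s-1) := (Real.rpow_pos_of_pos two_pos _).le
  rw [Real.div_rpow (div_nonneg hXp h2p1.le) (Real.rpow_pos_of_pos two_pos p).le,
      Real.div_rpow hXp h2p1.le,
      Real.mul_rpow (mul_nonneg h2s hX) (Real.rpow_nonneg hA q),
      Real.mul_rpow h2s hX,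
      ← Real.rpow_mul hX (2*p+1) (1/p),
      ← Real.rpow_mul (le_of_lt two_pos) p (1/p),
      ← Real.rpow_mul (le_of_lt two_pos) (s-1) (1/q),
      ← Real.rpow_mul hA q (1/q)]
  have hpp : p * (1/p) = 1 := by field_simp
  have hqq : q * (1/q) = 1 := by field_simp
  rw [hpp, hqq, Real.rpow_one, Real.rpow_one]
  have hs1q : (s-1) * (1/q) = (s-1)/q := by ring
  rw [hs1q]
  have hexp : (2*p+1)*(1/p) + 1/q = 3 := by
    have h1 : (2*p+1)*(1/p) = 2 + 1/p := by field_simp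
    rw [h1]; linarith
  have hX3 : X ^ ((2*p+1)*(1/p)) * X ^ (1/q) = X ^ (3:ℕ) := by
    rw [← Real.rpow_add' hX (by rw [hexp]; norm_num), hexp,
      show ((3:ℝ)) = ((3:ℕ):ℝ) by norm_num, Real.rpow_natCast]
  linear_combination (2 ^ ((s-1)/q) * A / ((2*p+1) ^ (1/p)) / 2) * hX3

lemma aux_simp2 (p q s Y A : ℝ) (hp : 1 < p) (hq : 1 < q) (hpq : 1/p + 1/q = 1)
    (hY : 0 ≤ Y) (hA : 0 ≤ A) :
    (2 * (Y ^ (2*p+1) / (2*p+1) / 2 ^ p)) ^ (1/p) * (2 ^ (s-1) * (2*Y) * A ^ q) ^ (1/q)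
      = 2 ^ ((s-1)/q) / (2*p+1) ^ (1/p) * (Y ^ 3 * A) := by
  have hp0 : (0:ℝ) < p := by linarith
  have hq0 : (0:ℝ) < q := by linarith
  have h2p1 : (0:ℝ) < 2*p+1 := by linarith
  have hYp : (0:ℝ) ≤ Y ^ (2*p+1) := Real.rpow_nonneg hY _
  have h2s : (0:ℝ) ≤ (2:ℝ) ^ (s-1) := (Real.rpow_pos_of_pos two_pos _).le
  have h1 : (2:ℝ) ^ (s-1) * (2*Y) * A ^ q = 2 ^ (s-1) * 2 * Y * A ^ q := by ring
  rw [h1,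
      Real.mul_rpow (by norm_num : (0:ℝ) ≤ 2)
        (div_nonneg (div_nonneg hYp h2p1.le) (Real.rpow_pos_of_pos two_pos p).le),
      Real.div_rpow (div_nonneg hYp h2p1.le) (Real.rpow_pos_of_pos two_pos p).le,
      Real.div_rpow hYp h2p1.le,
      Real.mul_rpow (mul_nonneg (mul_nonneg h2s (by norm_num)) hY) (Real.rpow_nonneg hA q),
      Real.mul_rpow (mul_nonneg h2s (by norm_num)) hY,
      Real.mul_rpow h2s (by norm_num : (0:ℝ) ≤ 2),
      ← Real.rpow_mul hY (2*p+1) (1/p),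
      ← Real.rpow_mul (le_of_lt two_pos) p (1/p),
      ← Real.rpow_mul (le_of_lt two_pos) (s-1) (1/q),
      ← Real.rpow_mul hA q (1/q)]
  have hpp : p * (1/p) = 1 := by field_simp
  have hqq : q * (1/q) = 1 := by field_simp
  rw [hpp, hqq, Real.rpow_one, Real.rpow_one]
  have hs1q : (s-1) * (1/q) = (s-1)/q := by ring
  rw [hs1q]
  have hexp : (2*p+1)*(1/p) + 1/q = 3 := by
    have h1 : (2*p+1)*(1/p) = 2 + 1/p := by field_simp
    rw [h1]; linarith
  have hY3 : Y ^ ((2*p+1)*(1/p)) * Y ^ (1/q) = Y ^ (3:ℕ) := by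
    rw [← Real.rpow_add' hY (by rw [hexp]; norm_num), hexp,
      show ((3:ℝ)) = ((3:ℕ):ℝ) by norm_num, Real.rpow_natCast]
  have h2pq : (2:ℝ) ^ (1/p) * 2 ^ (1/q) = 2 := by
    rw [← Real.rpow_add two_pos, hpq, Real.rpow_one]
  -- LHS = 2^(1/p) * (Y^{e1} / (2p+1)^(1/p) / 2) * (2^((s-1)/q) * 2^(1/q) * Y^(1/q) * A)
  linear_combination (Y ^ ((2*p+1)*(1/p)) * Y ^ (1/q) * A * 2 ^ ((s-1)/q)
      / ((2*p+1) ^ (1/p)) / 2) * h2pq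
    + (2 ^ ((s-1)/q) / ((2*p+1) ^ (1/p))) * A * hY3

theorem stmt13 (a b : ℝ) (ha : 0 ≤ a) (hab : a < b) (f f' f'' : ℝ → ℝ)
    (hf' : ∀ t ∈ Set.Icc a b, HasDerivAt f (f' t) t)
    (hf'' : ∀ t ∈ Set.Icc a b, HasDerivAt f' (f'' t) t)
    (hint : IntervalIntegrable f'' volume a b)
    (s : ℝ) (hs0 : 0 < s) (hs1 : s ≤ 1)
    (p q : ℝ) (hp : 1 < p) (hq : 1 < q) (hpq : 1 / p + 1 / q = 1)
    (hconc : SConcaveOn s (Set.Icc a b) (fun t => |f'' t| ^ q)) :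
    ∀ x ∈ Set.Icc a ((a + b) / 2), f' x = f' (a + b - x) →
      |((1 / (b - a)) * ∫ t in a..b, f t) - (1 / 2) * (f x + f (a + b - x))|
        ≤ (2 : ℝ) ^ ((s - 1) / q) / (2 * (b - a) * (2 * p + 1) ^ (1 / p)) *
          ((x - a) ^ 3 * (|f'' ((x + a) / 2)| + |f'' ((a + 2 * b - x) / 2)|)
            + (a + b - 2 * x) ^ 3 / 4 * |f'' ((a + b) / 2)|) := by
  intro x hx hsym
  have hx1 : a ≤ x := hx.1
  have hx2 : x ≤ (a + b) / 2 := hx.2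
  have hxc : x ≤ a + b - x := by linarith
  have hcb : a + b - x ≤ b := by linarith
  have hac : a ≤ a + b - x := by linarith
  have hba : (0:ℝ) < b - a := by linarith
  have hq0 : (0:ℝ) < q := by linarith
  have hp0 : (0:ℝ) < p := by linarith
  -- measurability and integrability facts
  have hmeas : AEStronglyMeasurable f'' (volume.restrict (Set.Ioc a b)) :=
    ((intervalIntegrable_iff_integrableOn_Ioc_of_le hab.le).mp hint).aestronglyMeasurable
  have hg0 : ∀ t : ℝ, 0 ≤ |f'' t| ^ q := fun t => Real.rpow_nonneg (abs_nonneg _) q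
  have hgmeas : AEStronglyMeasurable (fun t => |f'' t| ^ q)
      (volume.restrict (Set.Ioc a b)) := by
    have hcont : Continuous fun y : ℝ => |y| ^ q :=
      continuous_abs.rpow_const fun y => Or.inr hq0.le
    exact hcont.comp_aestronglyMeasurable hmeas
  have hbdd := aux_bdd (fun t => |f'' t| ^ q) s a b hab hs0 hs1 hg0 hconc
  haveI : IsFiniteMeasure (volume.restrict (Set.Ioc a b)) :=
    ⟨by rw [Measure.restrict_apply_univ]; exact measure_Ioc_lt_top⟩
  have hgint : IntervalIntegrable (fun t => |f'' t| ^ q) volume a b := by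
    rw [intervalIntegrable_iff_integrableOn_Ioc_of_le hab.le]
    apply Integrable.mono' (integrable_const (2 * |f'' ((a + b) / 2)| ^ q)) hgmeas
    exact ae_restrict_of_forall_mem measurableSet_Ioc fun t ht => by
      rw [Real.norm_of_nonneg (hg0 t)]; exact hbdd t (Set.Ioc_subset_Icc_self ht)
  have hsubint : ∀ u v : ℝ, a ≤ u → u ≤ v → v ≤ b →
      IntervalIntegrable (fun t => |f'' t| ^ q) volume u v := fun u v h1 h2 h3 =>
    hgint.mono_set (by
      rw [Set.uIcc_of_le h2, Set.uIcc_of_le hab.le]; exact Set.Icc_subset_Icc h1 h3)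
  have hfint'' : ∀ u v : ℝ, a ≤ u → u ≤ v → v ≤ b →
      IntervalIntegrable f'' volume u v := fun u v h1 h2 h3 =>
    hint.mono_set (by
      rw [Set.uIcc_of_le h2, Set.uIcc_of_le hab.le]; exact Set.Icc_subset_Icc h1 h3)
  have habs : ∀ t ∈ Set.Icc a b, |f'' t| ≤ (2 * |f'' ((a + b) / 2)| ^ q) ^ (1/q) := by
    intro t ht
    have hh : (|f'' t| ^ q) ^ (1/q) = |f'' t| := by
      rw [← Real.rpow_mul (abs_nonneg _), mul_one_div, div_self (ne_of_gt hq0),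
        Real.rpow_one]
    rw [← hh]
    exact Real.rpow_le_rpow (hg0 t) (hbdd t ht) (by positivity)
  -- per piece Hölder + HH bound
  have piece : ∀ u v w : ℝ, a ≤ u → u ≤ v → v ≤ b →
      |∫ t in u..v, (t - w) ^ 2 / 2 * f'' t|
        ≤ (∫ t in u..v, ((t - w) ^ 2 / 2) ^ p) ^ (1/p)
          * (2 ^ (s-1) * (v - u) * |f'' ((u+v)/2)| ^ q) ^ (1/q) := by
    intro u v w h1 h2 h3
    have hKc : Continuous (fun t : ℝ => (t - w) ^ 2 / 2) :=
      ((continuous_id.sub continuous_const).pow 2).div_const 2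
    have hKnn : ∀ t : ℝ, 0 ≤ (t - w) ^ 2 / 2 := fun t => by positivity
    have hameas : AEStronglyMeasurable (fun t => |f'' t|)
        (volume.restrict (Set.Ioc u v)) := by
      have := (hmeas.mono_measure
        (Measure.restrict_mono (Set.Ioc_subset_Ioc h1 h3) le_rfl)).norm
      simpa [Real.norm_eq_abs] using this
    have step1 : |∫ t in u..v, (t - w) ^ 2 / 2 * f'' t|
        ≤ ∫ t in u..v, |(t - w) ^ 2 / 2 * f'' t| :=
      intervalIntegral.abs_integral_le_integral_abs h2
    have step2 : (∫ t in u..v, |(t - w) ^ 2 / 2 * f'' t|)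
        = ∫ t in u..v, (t - w) ^ 2 / 2 * |f'' t| := by
      apply intervalIntegral.integral_congr
      intro t _
      simp [abs_mul, abs_of_nonneg (hKnn t)]
    have step3 := aux_holder p q hp hpq (fun t => (t - w) ^ 2 / 2) (fun t => |f'' t|)
      u v h2 hKc hKnn hameas (fun t => abs_nonneg _)
      ((2 * |f'' ((a + b) / 2)| ^ q) ^ (1/q))
      (fun t ht => habs t ⟨h1.trans ht.1.le, ht.2.trans h3⟩)
    have step4 : (∫ t in u..v, |f'' t| ^ q)
        ≤ 2 ^ (s-1) * (v - u) * |f'' ((u+v)/2)| ^ q :=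
      aux_hh (fun t => |f'' t| ^ q) s a b hs0 hs1 hconc u v h1 h2 h3
        (hsubint u v h1 h2 h3)
    have step5 : (∫ t in u..v, |f'' t| ^ q) ^ (1/q)
        ≤ (2 ^ (s-1) * (v - u) * |f'' ((u+v)/2)| ^ q) ^ (1/q) :=
      Real.rpow_le_rpow (intervalIntegral.integral_nonneg h2 fun t _ => hg0 t)
        step4 (by positivity)
    have hKint_nn : (0:ℝ) ≤ (∫ t in u..v, ((t - w) ^ 2 / 2) ^ p) ^ (1/p) :=
      Real.rpow_nonneg (intervalIntegral.integral_nonneg h2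
        fun t _ => Real.rpow_nonneg (hKnn t) p) _
    calc |∫ t in u..v, (t - w) ^ 2 / 2 * f'' t|
        ≤ ∫ t in u..v, |(t - w) ^ 2 / 2 * f'' t| := step1
      _ = ∫ t in u..v, (t - w) ^ 2 / 2 * |f'' t| := step2
      _ ≤ (∫ t in u..v, ((t - w) ^ 2 / 2) ^ p) ^ (1/p)
            * (∫ t in u..v, |f'' t| ^ q) ^ (1/q) := step3
      _ ≤ _ := mul_le_mul_of_nonneg_left step5 hKint_nn
  -- integration by parts identities
  have hder1 : ∀ u v : ℝ, a ≤ u → v ≤ b → ∀ t ∈ Set.Icc u v, HasDerivAt f (f' t) t :=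
    fun u v h1 h2 t ht => hf' t ⟨h1.trans ht.1, ht.2.trans h2⟩
  have hder2 : ∀ u v : ℝ, a ≤ u → v ≤ b → ∀ t ∈ Set.Icc u v, HasDerivAt f' (f'' t) t :=
    fun u v h1 h2 t ht => hf'' t ⟨h1.trans ht.1, ht.2.trans h2⟩
  have I1 := aux_ibp f f' f'' a x a hx1 (hder1 a x le_rfl (by linarith))
    (hder2 a x le_rfl (by linarith)) (hfint'' a x le_rfl hx1 (by linarith))
  have I2 := aux_ibp f f' f'' x (a+b-x) ((a+b)/2) hxc (hder1 x (a+b-x) hx1 hcb)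
    (hder2 x (a+b-x) hx1 hcb) (hfint'' x (a+b-x) hx1 hxc hcb)
  have I3 := aux_ibp f f' f'' (a+b-x) b b hcb (hder1 (a+b-x) b hac le_rfl)
    (hder2 (a+b-x) b hac le_rfl) (hfint'' (a+b-x) b hac hcb le_rfl)
  have hfc : ∀ u v : ℝ, a ≤ u → u ≤ v → v ≤ b → IntervalIntegrable f volume u v := by
    intro u v h1 h2 h3
    apply ContinuousOn.intervalIntegrable
    rw [Set.uIcc_of_le h2]
    exact fun t ht => (hf' t ⟨h1.trans ht.1, ht.2.trans h3⟩).continuousAt.continuousWithinAt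
  have hsplit1 : (∫ t in a..x, f t) + (∫ t in x..(a+b-x), f t)
      = ∫ t in a..(a+b-x), f t :=
    intervalIntegral.integral_add_adjacent_intervals
      (hfc a x le_rfl hx1 (by linarith)) (hfc x (a+b-x) hx1 hxc hcb)
  have hsplit2 : (∫ t in a..(a+b-x), f t) + (∫ t in (a+b-x)..b, f t)
      = ∫ t in a..b, f t :=
    intervalIntegral.integral_add_adjacent_intervals
      (hfc a (a+b-x) le_rfl hac hcb) (hfc (a+b-x) b hac hcb le_rfl)
  have hT : (∫ t in a..x, (t - a) ^ 2 / 2 * f'' t)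
        + (∫ t in x..(a+b-x), (t - (a+b)/2) ^ 2 / 2 * f'' t)
        + (∫ t in (a+b-x)..b, (t - b) ^ 2 / 2 * f'' t)
      = (∫ t in a..b, f t) - (b-a)/2 * (f x + f (a+b-x)) := by
    rw [I1, I2, I3, hsym, ← hsplit2, ← hsplit1]
    ring
  -- rewrite goal LHS
  have hLgoal : (1 / (b - a)) * (∫ t in a..b, f t) - 1/2 * (f x + f (a+b-x))
      = (1 / (b - a)) * ((∫ t in a..b, f t) - (b-a)/2 * (f x + f (a+b-x))) := by
    field_simp
  -- piece bounds, simplified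
  have E1 : |∫ t in a..x, (t - a) ^ 2 / 2 * f'' t|
      ≤ 2 ^ ((s-1)/q) / (2 * (2*p+1) ^ (1/p)) * ((x - a) ^ 3 * |f'' ((a+x)/2)|) := by
    have h := piece a x a le_rfl hx1 (by linarith)
    rw [aux_kint p hp a x hx1] at h
    rwa [aux_simp1 p q s (x - a) (|f'' ((a+x)/2)|) hp hq hpq (by linarith)
      (abs_nonneg _)] at h
  have E3 : |∫ t in (a+b-x)..b, (t - b) ^ 2 / 2 * f'' t|
      ≤ 2 ^ ((s-1)/q) / (2 * (2*p+1) ^ (1/p))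
        * ((x - a) ^ 3 * |f'' ((a+b-x+b)/2)|) := by
    have h := piece (a+b-x) b b hac hcb le_rfl
    rw [aux_kint' p hp (a+b-x) b hcb,
      show b - (a+b-x) = x - a from by ring] at h
    rwa [aux_simp1 p q s (x - a) (|f'' ((a+b-x+b)/2)|) hp hq hpq (by linarith)
      (abs_nonneg _)] at h
  have E2 : |∫ t in x..(a+b-x), (t - (a+b)/2) ^ 2 / 2 * f'' t|
      ≤ 2 ^ ((s-1)/q) / (2*p+1) ^ (1/p)
        * (((a+b)/2 - x) ^ 3 * |f'' ((a+b)/2)|) := by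
    have h := piece x (a+b-x) ((a+b)/2) hx1 hxc hcb
    have hcont : Continuous fun t : ℝ => ((t - (a+b)/2) ^ 2 / 2) ^ p :=
      (((continuous_id.sub continuous_const).pow 2).div_const 2).rpow_const
        fun t => Or.inr hp0.le
    have hker : (∫ t in x..(a+b-x), ((t - (a+b)/2) ^ 2 / 2) ^ p)
        = 2 * (((a+b)/2 - x) ^ (2*p+1) / (2*p+1) / 2 ^ p) := by
      rw [← intervalIntegral.integral_add_adjacent_intervals
          (a := x) (b := (a+b)/2) (c := a+b-x)
          (hcont.intervalIntegrable _ _) (hcont.intervalIntegrable _ _),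
        aux_kint' p hp x ((a+b)/2) hx2,
        aux_kint p hp ((a+b)/2) (a+b-x) (by linarith),
        show a+b-x - (a+b)/2 = (a+b)/2 - x from by ring]
      ring
    rw [hker, show a+b-x - x = 2 * ((a+b)/2 - x) from by ring,
      show (x + (a+b-x))/2 = (a+b)/2 from by ring] at h
    rwa [aux_simp2 p q s ((a+b)/2 - x) (|f'' ((a+b)/2)|) hp hq hpq (by linarith)
      (abs_nonneg _)] at h
  -- assemble
  rw [hLgoal, ← hT, abs_mul, abs_of_pos (by positivity : (0:ℝ) < 1/(b-a))]
  have htri : |(∫ t in a..x, (t - a) ^ 2 / 2 * f'' t)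
        + (∫ t in x..(a+b-x), (t - (a+b)/2) ^ 2 / 2 * f'' t)
        + (∫ t in (a+b-x)..b, (t - b) ^ 2 / 2 * f'' t)|
      ≤ |∫ t in a..x, (t - a) ^ 2 / 2 * f'' t|
        + |∫ t in x..(a+b-x), (t - (a+b)/2) ^ 2 / 2 * f'' t|
        + |∫ t in (a+b-x)..b, (t - b) ^ 2 / 2 * f'' t| :=
    (abs_add_le _ _).trans (by gcongr; exact abs_add_le _ _)
  have hsum := add_le_add (add_le_add E1 E2) E3
  have hfinal := htri.trans hsum
  calc (1/(b-a)) * |(∫ t in a..x, (t - a) ^ 2 / 2 * f'' t)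
        + (∫ t in x..(a+b-x), (t - (a+b)/2) ^ 2 / 2 * f'' t)
        + (∫ t in (a+b-x)..b, (t - b) ^ 2 / 2 * f'' t)|
      ≤ (1/(b-a)) * (2 ^ ((s-1)/q) / (2 * (2*p+1) ^ (1/p)) * ((x - a) ^ 3 * |f'' ((a+x)/2)|)
          + 2 ^ ((s-1)/q) / (2*p+1) ^ (1/p) * (((a+b)/2 - x) ^ 3 * |f'' ((a+b)/2)|)
          + 2 ^ ((s-1)/q) / (2 * (2*p+1) ^ (1/p)) * ((x - a) ^ 3 * |f'' ((a+b-x+b)/2)|)) :=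
        mul_le_mul_of_nonneg_left hfinal (by positivity)
    _ = (2 : ℝ) ^ ((s - 1) / q) / (2 * (b - a) * (2 * p + 1) ^ (1 / p)) *
          ((x - a) ^ 3 * (|f'' ((x + a) / 2)| + |f'' ((a + 2 * b - x) / 2)|)
            + (a + b - 2 * x) ^ 3 / 4 * |f'' ((a + b) / 2)|) := by
        rw [show (a+x)/2 = (x+a)/2 from by ring,
          show (a+b-x+b)/2 = (a + 2*b - x)/2 from by ring]
        have hPpos : (0:ℝ) < (2*p+1) ^ (1/p) := Real.rpow_pos_of_pos (by linarith) _
        field_simp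
        ring
end

section
/- Let f : [a,b] → ℝ (a < b) be such that f′ is absolutely continuous on [a,b], f″ ∈ L¹[a,b], and |f″|^q is s-concave in the second sense on [a,b] for some fixed s ∈ (0,1], where q > 1 and 1/p + 1/q = 1. Then |(1/(b−a))∫_a^b f(t) dt − (1/2)[f((3a+b)/4) + f((a+3b)/4)]| ≤ (2^{(s−1)/q}(b−a)²/(128(2p+1)^{1/p}))[|f″((7a+b)/8)| + 2|f″((a+b)/2)| + |f″((a+7b)/8)|]. -/
open MeasureTheory

open intervalIntegral

private lemma sq_half_hasDeriv (c t : ℝ) :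
    HasDerivAt (fun u => (u - c)^2/2) (t - c) t := by
  have h := (((hasDerivAt_id t).sub_const c).pow 2).div_const 2
  refine h.congr_deriv ?_
  simp

private lemma sq_half_hasDeriv' (d t : ℝ) :
    HasDerivAt (fun u => (d - u)^2/2) (-(d - t)) t := by
  have h := (((hasDerivAt_id t).const_sub d).pow 2).div_const 2
  refine h.congr_deriv ?_
  simp [pow_one]
  ring

lemma quarter_id (f f' f'' : ℝ → ℝ) (c d μ : ℝ) (hμ : μ = (c + d)/2) (hcd : c ≤ d)
    (hf' : ∀ t ∈ Set.Icc c d, HasDerivAt f (f' t) t)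
    (hf'' : ∀ t ∈ Set.Icc c d, HasDerivAt f' (f'' t) t)
    (hK1 : IntervalIntegrable (fun t => (t - c)^2/2 * f'' t) volume c μ)
    (hK2 : IntervalIntegrable (fun t => (d - t)^2/2 * f'' t) volume μ d)
    (hfi1 : IntervalIntegrable f volume c μ)
    (hfi2 : IntervalIntegrable f volume μ d) :
    (∫ t in c..μ, (t - c)^2/2 * f'' t) + (∫ t in μ..d, (d - t)^2/2 * f'' t)
      = (∫ t in c..μ, f t) + (∫ t in μ..d, f t) - (d - c) * f μ := by
  have hcm : c ≤ μ := by rw [hμ]; linarith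
  have hmd : μ ≤ d := by rw [hμ]; linarith
  have h1 : ∫ t in c..μ, ((t - c)^2/2 * f'' t - f t)
      = ((μ - c)^2/2 * f' μ - (μ - c) * f μ) - ((c - c)^2/2 * f' c - (c - c) * f c) := by
    apply integral_eq_sub_of_hasDerivAt
      (f := fun u => (u - c)^2/2 * f' u - (u - c) * f u)
    · intro t ht
      rw [Set.uIcc_of_le hcm] at ht
      have htd : t ∈ Set.Icc c d := ⟨ht.1, le_trans ht.2 hmd⟩
      have hA := (sq_half_hasDeriv c t).mul (hf'' t htd)
      have hB := (((hasDerivAt_id t).sub_const c).mul (hf' t htd))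
      refine (hA.sub hB).congr_deriv ?_
      simp only [id_eq]
      ring
    · exact hK1.sub hfi1
  have h2 : ∫ t in μ..d, ((d - t)^2/2 * f'' t - f t)
      = ((d - d)^2/2 * f' d + (d - d) * f d) - ((d - μ)^2/2 * f' μ + (d - μ) * f μ) := by
    apply integral_eq_sub_of_hasDerivAt
      (f := fun u => (d - u)^2/2 * f' u + (d - u) * f u)
    · intro t ht
      rw [Set.uIcc_of_le hmd] at ht
      have htd : t ∈ Set.Icc c d := ⟨le_trans hcm ht.1, ht.2⟩
      have hA := (sq_half_hasDeriv' d t).mul (hf'' t htd)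
      have hB := (((hasDerivAt_id t).const_sub d).mul (hf' t htd))
      refine (hA.add hB).congr_deriv ?_
      simp only [id_eq]
      ring
    · exact hK2.sub hfi2
  rw [integral_sub hK1 hfi1] at h1
  rw [integral_sub hK2 hfi2] at h2
  have e1 : (∫ t in c..μ, (t - c)^2/2 * f'' t)
      = ((μ - c)^2/2 * f' μ - (μ - c) * f μ) - ((c - c)^2/2 * f' c - (c - c) * f c)
        + ∫ t in c..μ, f t := by linarith
  have e2 : (∫ t in μ..d, (d - t)^2/2 * f'' t)
      = ((d - d)^2/2 * f' d + (d - d) * f d) - ((d - μ)^2/2 * f' μ + (d - μ) * f μ)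
        + ∫ t in μ..d, f t := by linarith
  rw [e1, e2, hμ]
  ring

lemma hh_bound (g : ℝ → ℝ) (c d μ s : ℝ) (hμ : μ = (c + d)/2) (hcd : c ≤ d)
    (hgi : IntervalIntegrable g volume c d)
    (hmid : ∀ t ∈ Set.Icc c d, g t + g (c + d - t) ≤ 2 ^ s * g μ) :
    ∫ t in c..d, g t ≤ (d - c) * 2^(s-1) * g μ := by
  have hrefl : ∫ t in c..d, g (c + d - t) = ∫ t in c..d, g t := by
    have h := intervalIntegral.integral_comp_sub_left g (c + d) (a := c) (b := d)
    simpa using h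
  have hgi' : IntervalIntegrable (fun t => g (c + d - t)) volume c d := by
    have := (hgi.comp_sub_left (c + d)).symm
    simpa using this
  have h2 : ∫ t in c..d, (g t + g (c + d - t)) ≤ ∫ t in c..d, (2^s * g μ : ℝ) :=
    intervalIntegral.integral_mono_on hcd (hgi.add hgi') intervalIntegrable_const hmid
  rw [intervalIntegral.integral_add hgi hgi', hrefl, intervalIntegral.integral_const,
    smul_eq_mul] at h2
  have hpow : (2:ℝ)^(s-1) = 2^s/2 := by
    rw [Real.rpow_sub (by norm_num : (0:ℝ) < 2), Real.rpow_one]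
  rw [hpow]
  linarith

lemma kernel_pow_integral (L p : ℝ) (hL : 0 ≤ L) (hp : 1 < p) :
    ∫ u in (0:ℝ)..L, (u^2/2) ^ p = L ^ (2*p+1) / (2^p * (2*p+1)) := by
  have h1 : ∀ u ∈ Set.uIcc (0:ℝ) L, (u^2/2) ^ p = u^(2*p) / 2^p := by
    intro u hu
    rw [Set.uIcc_of_le hL] at hu
    rw [Real.div_rpow (sq_nonneg u) (by norm_num : (0:ℝ) ≤ 2)]
    congr 1
    rw [← Real.rpow_natCast u 2, ← Real.rpow_mul hu.1]
    norm_num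
  rw [intervalIntegral.integral_congr h1, intervalIntegral.integral_div,
    integral_rpow (Or.inl (by linarith : (-1:ℝ) < 2*p))]
  rw [Real.zero_rpow (by positivity : 2*p+1 ≠ 0)]
  rw [sub_zero, div_div]
  ring_nf

lemma holder_quarter (c d : ℝ) (hcd : c ≤ d) (K φ : ℝ → ℝ) (p q : ℝ)
    (hpq : Real.HolderConjugate p q)
    (hK : ContinuousOn K (Set.Icc c d)) (hK0 : ∀ t ∈ Set.Icc c d, 0 ≤ K t)
    (hφm : AEStronglyMeasurable φ (volume.restrict (Set.Ioc c d)))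
    (C : ℝ) (hφb : ∀ᵐ t ∂(volume.restrict (Set.Ioc c d)), |φ t| ≤ C) :
    |∫ t in c..d, K t * φ t|
      ≤ (∫ t in c..d, K t ^ p) ^ (1/p) * (∫ t in c..d, |φ t| ^ q) ^ (1/q) := by
  haveI : IsFiniteMeasure (volume.restrict (Set.Ioc c d)) :=
    ⟨by rw [Measure.restrict_apply_univ]; exact measure_Ioc_lt_top⟩
  obtain ⟨CK, hCK⟩ := IsCompact.exists_bound_of_continuousOn isCompact_Icc hK
  have hKm : AEStronglyMeasurable K (volume.restrict (Set.Ioc c d)) :=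
    (hK.mono Set.Ioc_subset_Icc_self).aestronglyMeasurable measurableSet_Ioc
  have haemem : ∀ᵐ t ∂(volume.restrict (Set.Ioc c d)), t ∈ Set.Ioc c d :=
    ae_restrict_mem measurableSet_Ioc
  have hKmem : MemLp K (ENNReal.ofReal p) (volume.restrict (Set.Ioc c d)) := by
    apply MemLp.of_bound hKm CK
    filter_upwards [haemem] with t ht
    exact hCK t (Set.Ioc_subset_Icc_self ht)
  have hφabs : AEStronglyMeasurable (fun t => |φ t|) (volume.restrict (Set.Ioc c d)) := by
    have h := hφm.norm
    simpa [Real.norm_eq_abs] using h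
  have hφmem : MemLp (fun t => |φ t|) (ENNReal.ofReal q) (volume.restrict (Set.Ioc c d)) := by
    apply MemLp.of_bound hφabs C
    filter_upwards [hφb] with t ht
    simpa [Real.norm_eq_abs, abs_abs] using ht
  have habs : |∫ t in c..d, K t * φ t| ≤ ∫ t in c..d, |K t * φ t| :=
    intervalIntegral.abs_integral_le_integral_abs hcd
  have hcongr : ∫ t in c..d, |K t * φ t| = ∫ t in c..d, K t * |φ t| := by
    rw [intervalIntegral.integral_of_le hcd, intervalIntegral.integral_of_le hcd]
    apply MeasureTheory.integral_congr_ae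
    filter_upwards [haemem] with t ht
    rw [abs_mul, abs_of_nonneg (hK0 t (Set.Ioc_subset_Icc_self ht))]
  have hH : ∫ t in Set.Ioc c d, K t * |φ t|
      ≤ (∫ t in Set.Ioc c d, K t ^ p) ^ (1/p) * (∫ t in Set.Ioc c d, |φ t| ^ q) ^ (1/q) := by
    apply MeasureTheory.integral_mul_le_Lp_mul_Lq_of_nonneg hpq
    · filter_upwards [haemem] with t ht
      exact hK0 t (Set.Ioc_subset_Icc_self ht)
    · filter_upwards with t
      exact abs_nonneg _
    · exact hKmem
    · exact hφmem
  calc |∫ t in c..d, K t * φ t| ≤ ∫ t in c..d, |K t * φ t| := habs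
    _ = ∫ t in c..d, K t * |φ t| := hcongr
    _ ≤ (∫ t in c..d, K t ^ p) ^ (1/p) * (∫ t in c..d, |φ t| ^ q) ^ (1/q) := by
        rw [intervalIntegral.integral_of_le hcd, intervalIntegral.integral_of_le hcd,
          intervalIntegral.integral_of_le hcd]
        exact hH

lemma two_point_mean (X Y Z q : ℝ) (hq : 1 ≤ q) (hX : 0 ≤ X) (hY : 0 ≤ Y) (hZ : 0 ≤ Z)
    (h : X^q + Y^q ≤ 2 * Z^q) : X + Y ≤ 2 * Z := by
  have hmean := Real.rpow_arith_mean_le_arith_mean_rpow (Finset.univ : Finset (Fin 2))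
      ![1/2, 1/2] ![X, Y] (by intro i _; fin_cases i <;> norm_num)
      (by norm_num [Fin.sum_univ_succ]) (by intro i _; fin_cases i <;> simpa) hq
  simp [Fin.sum_univ_succ] at hmean
  have h2 : ((X+Y)/2) ^ q ≤ Z ^ q := by
    have he : (X+Y)/2 = 2⁻¹ * X + 2⁻¹ * Y := by ring
    rw [he]
    refine le_trans hmean ?_
    linarith
  have h3 := (Real.rpow_le_rpow_iff (by positivity) hZ (by linarith)).1 h2
  linarith
lemma boundL (φ : ℝ → ℝ) (c d ν p q s CB : ℝ) (hcd : c ≤ d) (hν : ν = (c+d)/2)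
    (hp : 1 < p) (hpq : Real.HolderConjugate p q)
    (hm : AEStronglyMeasurable φ (volume.restrict (Set.Ioc c d)))
    (hb : ∀ᵐ t ∂(volume.restrict (Set.Ioc c d)), |φ t| ≤ CB)
    (hgi : IntervalIntegrable (fun t => |φ t|^q) volume c d)
    (hmid : ∀ t ∈ Set.Icc c d, |φ t|^q + |φ (c + d - t)|^q ≤ 2^s * |φ ν|^q) :
    |∫ t in c..d, (t - c)^2/2 * φ t| ≤
      ((d-c)^(2*p+1)/(2^p*(2*p+1)))^(1/p) * ((d-c) * 2^(s-1) * |φ ν|^q)^(1/q) := by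
  have h1 := holder_quarter c d hcd (fun t => (t - c)^2/2) φ p q hpq
    (Continuous.continuousOn (by continuity)) (fun t _ => by positivity) hm CB hb
  have h2 : (∫ t in c..d, ((t - c)^2/2) ^ p) = (d-c)^(2*p+1)/(2^p*(2*p+1)) := by
    have h3 := intervalIntegral.integral_comp_sub_right (fun u => (u^2/2) ^ p) c (a := c) (b := d)
    simp only [sub_self] at h3
    rw [h3, kernel_pow_integral (d - c) p (by linarith) hp]
  have h4 : (∫ t in c..d, |φ t| ^ q) ≤ (d-c) * 2^(s-1) * |φ ν|^q := by
    have := hh_bound (fun t => |φ t|^q) c d ν s hν hcd hgi hmid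
    simpa using this
  refine le_trans h1 ?_
  rw [h2]
  have hint_nonneg : (0:ℝ) ≤ ∫ t in c..d, |φ t| ^ q :=
    intervalIntegral.integral_nonneg hcd (fun u _ => Real.rpow_nonneg (abs_nonneg _) q)
  have hq0 : (0:ℝ) < q := hpq.symm.pos
  have h5 := Real.rpow_le_rpow hint_nonneg h4 (le_of_lt (one_div_pos.2 hq0))
  apply mul_le_mul_of_nonneg_left h5
  apply Real.rpow_nonneg
  apply div_nonneg (Real.rpow_nonneg (by linarith) _)
  have h6 : (0:ℝ) < (2:ℝ)^p := Real.rpow_pos_of_pos (by norm_num) p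
  nlinarith

lemma boundR (φ : ℝ → ℝ) (c d ν p q s CB : ℝ) (hcd : c ≤ d) (hν : ν = (c+d)/2)
    (hp : 1 < p) (hpq : Real.HolderConjugate p q)
    (hm : AEStronglyMeasurable φ (volume.restrict (Set.Ioc c d)))
    (hb : ∀ᵐ t ∂(volume.restrict (Set.Ioc c d)), |φ t| ≤ CB)
    (hgi : IntervalIntegrable (fun t => |φ t|^q) volume c d)
    (hmid : ∀ t ∈ Set.Icc c d, |φ t|^q + |φ (c + d - t)|^q ≤ 2^s * |φ ν|^q) :
    |∫ t in c..d, (d - t)^2/2 * φ t| ≤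
      ((d-c)^(2*p+1)/(2^p*(2*p+1)))^(1/p) * ((d-c) * 2^(s-1) * |φ ν|^q)^(1/q) := by
  have h1 := holder_quarter c d hcd (fun t => (d - t)^2/2) φ p q hpq
    (Continuous.continuousOn (by continuity)) (fun t _ => by positivity) hm CB hb
  have h2 : (∫ t in c..d, ((d - t)^2/2) ^ p) = (d-c)^(2*p+1)/(2^p*(2*p+1)) := by
    have h3 := intervalIntegral.integral_comp_sub_left (fun u => (u^2/2) ^ p) d (a := c) (b := d)
    simp only [sub_self] at h3
    rw [h3, kernel_pow_integral (d - c) p (by linarith) hp]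
  have h4 : (∫ t in c..d, |φ t| ^ q) ≤ (d-c) * 2^(s-1) * |φ ν|^q := by
    have := hh_bound (fun t => |φ t|^q) c d ν s hν hcd hgi hmid
    simpa using this
  refine le_trans h1 ?_
  rw [h2]
  have hint_nonneg : (0:ℝ) ≤ ∫ t in c..d, |φ t| ^ q :=
    intervalIntegral.integral_nonneg hcd (fun u _ => Real.rpow_nonneg (abs_nonneg _) q)
  have hq0 : (0:ℝ) < q := hpq.symm.pos
  have h5 := Real.rpow_le_rpow hint_nonneg h4 (le_of_lt (one_div_pos.2 hq0))
  apply mul_le_mul_of_nonneg_left h5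
  apply Real.rpow_nonneg
  apply div_nonneg (Real.rpow_nonneg (by linarith) _)
  have h6 : (0:ℝ) < (2:ℝ)^p := Real.rpow_pos_of_pos (by norm_num) p
  nlinarith
set_option maxHeartbeats 2000000 in
theorem stmt15 (a b : ℝ) (ha : 0 ≤ a) (hab : a < b) (f f' f'' : ℝ → ℝ)
    (hf' : ∀ t ∈ Set.Icc a b, HasDerivAt f (f' t) t)
    (hf'' : ∀ t ∈ Set.Icc a b, HasDerivAt f' (f'' t) t)
    (hint : IntervalIntegrable f'' volume a b)
    (s : ℝ) (hs0 : 0 < s) (hs1 : s ≤ 1)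
    (p q : ℝ) (hp : 1 < p) (hq : 1 < q) (hpq : 1 / p + 1 / q = 1)
    (hconc : SConcaveOn s (Set.Icc a b) (fun t => |f'' t| ^ q)) :
    |((1 / (b - a)) * ∫ t in a..b, f t) - (1 / 2) * (f ((3 * a + b) / 4) + f ((a + 3 * b) / 4))|
      ≤ (2 : ℝ) ^ ((s - 1) / q) * (b - a) ^ 2 / (128 * (2 * p + 1) ^ (1 / p)) *
          (|f'' ((7 * a + b) / 8)| + 2 * |f'' ((a + b) / 2)| + |f'' ((a + 7 * b) / 8)|) := by
  have hba : (0:ℝ) < b - a := by linarith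
  have hba' : b - a ≠ 0 := ne_of_gt hba
  have hp0 : (0:ℝ) < p := lt_trans one_pos hp
  have hq0 : (0:ℝ) < q := lt_trans one_pos hq
  have hpq' : Real.HolderConjugate p q := Real.holderConjugate_iff.2 ⟨hp, by rw [← one_div, ← one_div]; exact hpq⟩
  have hg0 : ∀ t : ℝ, (0:ℝ) ≤ |f'' t| ^ q := fun t => Real.rpow_nonneg (abs_nonneg _) q
  -- pointwise consequences of s-concavity
  have hgmid : ∀ c d : ℝ, a ≤ c → d ≤ b → ∀ t ∈ Set.Icc c d,
      |f'' t|^q + |f'' (c + d - t)|^q ≤ 2^s * |f'' ((c+d)/2)|^q := by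
    intro c d hc hd t ht
    have ht1 : t ∈ Set.Icc a b := ⟨le_trans hc ht.1, le_trans ht.2 hd⟩
    have ht2 : c + d - t ∈ Set.Icc a b := by
      constructor
      · have := ht.2; linarith
      · have := ht.1; linarith
    have h := hconc t ht1 (c+d-t) ht2 (1/2) (1/2) (by norm_num) (by norm_num) (by norm_num)
    have harg : (1:ℝ)/2 * t + 1/2 * (c + d - t) = (c+d)/2 := by ring
    rw [harg] at h
    have h1 : (2:ℝ)^s * ((1:ℝ)/2)^s = 1 := by
      rw [← Real.mul_rpow (by norm_num) (by norm_num)]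
      norm_num
    have h2s : (0:ℝ) ≤ (2:ℝ)^s := Real.rpow_nonneg (by norm_num) s
    have hmul := mul_le_mul_of_nonneg_left h h2s
    calc |f'' t|^q + |f'' (c+d-t)|^q
        = 2^s * ((1/2:ℝ)^s * |f'' t|^q + (1/2:ℝ)^s * |f'' (c+d-t)|^q) := by
          rw [mul_add, ← mul_assoc, ← mul_assoc, h1, one_mul, one_mul]
      _ ≤ 2^s * |f'' ((c+d)/2)|^q := hmul
  have hbd : ∀ t ∈ Set.Icc a b, |f'' t|^q ≤ 2 * |f'' ((a+b)/2)|^q := by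
    intro t ht
    have h := hgmid a b le_rfl le_rfl t ht
    have h2 : (2:ℝ)^s ≤ 2 := by
      calc (2:ℝ)^s ≤ 2^(1:ℝ) := Real.rpow_le_rpow_of_exponent_le one_le_two hs1
        _ = 2 := Real.rpow_one 2
    nlinarith [hg0 (a+b-t), hg0 ((a+b)/2)]
  have hCbd : ∀ t ∈ Set.Icc a b, |f'' t| ≤ (2 * |f'' ((a+b)/2)|^q)^(1/q) := by
    intro t ht
    have h := Real.rpow_le_rpow (hg0 t) (hbd t ht) (le_of_lt (one_div_pos.2 hq0))
    rwa [← Real.rpow_mul (abs_nonneg _), mul_one_div, div_self (ne_of_gt hq0),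
      Real.rpow_one] at h
  -- measurability of f'' on subintervals
  have hf''m : ∀ c d : ℝ, a ≤ c → d ≤ b →
      AEStronglyMeasurable f'' (volume.restrict (Set.Ioc c d)) := by
    intro c d hc hd
    have hb0 : ∀ᵐ t : ℝ, t ≠ b := by
      have hset : {x : ℝ | ¬ x ≠ b} = {b} := by ext x; simp
      rw [ae_iff, hset]
      exact Real.volume_singleton
    have hae : deriv f' =ᵐ[volume.restrict (Set.Ioc c d)] f'' := by
      filter_upwards [ae_restrict_of_ae hb0, ae_restrict_mem measurableSet_Ioc] with t htb htm
      have htIoo : t ∈ Set.Ioo a b :=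
        ⟨lt_of_le_of_lt hc htm.1, lt_of_le_of_ne (le_trans htm.2 hd) htb⟩
      exact (hf'' t (Set.Ioo_subset_Icc_self htIoo)).deriv
    exact ((measurable_deriv f').aestronglyMeasurable).congr hae
  -- integrability of |f''|^q on subintervals
  have hgint : ∀ c d : ℝ, a ≤ c → c ≤ d → d ≤ b →
      IntervalIntegrable (fun t => |f'' t|^q) volume c d := by
    intro c d hac hcd hdb
    rw [intervalIntegrable_iff_integrableOn_Ioc_of_le hcd]
    haveI : IsFiniteMeasure (volume.restrict (Set.Ioc c d)) :=
      ⟨by rw [Measure.restrict_apply_univ]; exact measure_Ioc_lt_top⟩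
    have hASM : AEStronglyMeasurable (fun t => |f'' t|^q) (volume.restrict (Set.Ioc c d)) := by
      have hcont : Continuous (fun x : ℝ => |x| ^ q) :=
        continuous_abs.rpow_const (fun x => Or.inr (le_of_lt hq0))
      exact hcont.comp_aestronglyMeasurable (hf''m c d hac hdb)
    apply Integrable.mono' (integrable_const (2 * |f'' ((a+b)/2)|^q)) hASM
    filter_upwards [ae_restrict_mem measurableSet_Ioc] with t ht
    rw [Real.norm_eq_abs, abs_of_nonneg (hg0 t)]
    exact hbd t ⟨le_trans hac (le_of_lt ht.1), le_trans ht.2 hdb⟩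
  have hf''b : ∀ c d : ℝ, a ≤ c → d ≤ b →
      ∀ᵐ t ∂(volume.restrict (Set.Ioc c d)), |f'' t| ≤ (2 * |f'' ((a+b)/2)|^q)^(1/q) := by
    intro c d hac hdb
    filter_upwards [ae_restrict_mem measurableSet_Ioc] with t ht
    exact hCbd t ⟨le_trans hac (le_of_lt ht.1), le_trans ht.2 hdb⟩
  -- integrability of f and K * f''
  have hfc : ContinuousOn f (Set.Icc a b) := fun t ht => (hf' t ht).continuousAt.continuousWithinAt
  have hfint : ∀ c d : ℝ, a ≤ c → d ≤ b → c ≤ d → IntervalIntegrable f volume c d := by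
    intro c d hac hdb hcd
    apply (hfc.mono ?_).intervalIntegrable
    rw [Set.uIcc_of_le hcd]
    exact Set.Icc_subset_Icc hac hdb
  have hKf : ∀ (K : ℝ → ℝ), Continuous K → ∀ (c d : ℝ), a ≤ c → d ≤ b → c ≤ d →
      IntervalIntegrable (fun t => K t * f'' t) volume c d := by
    intro K hK c d hac hdb hcd
    have h1 : IntervalIntegrable f'' volume c d := by
      apply hint.mono_set
      rw [Set.uIcc_of_le hcd, Set.uIcc_of_le (le_of_lt hab)]
      exact Set.Icc_subset_Icc hac hdb
    exact h1.continuousOn_mul hK.continuousOn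
  -- quarter identities
  have hid1 := quarter_id f f' f'' a ((a+b)/2) ((3*a+b)/4) (by ring) (by linarith)
    (fun t ht => hf' t ⟨ht.1, by linarith [ht.2]⟩)
    (fun t ht => hf'' t ⟨ht.1, by linarith [ht.2]⟩)
    (hKf _ (by continuity) a ((3*a+b)/4) le_rfl (by linarith) (by linarith))
    (hKf _ (by continuity) ((3*a+b)/4) ((a+b)/2) (by linarith) (by linarith) (by linarith))
    (hfint a ((3*a+b)/4) le_rfl (by linarith) (by linarith))
    (hfint ((3*a+b)/4) ((a+b)/2) (by linarith) (by linarith) (by linarith))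
  have hid2 := quarter_id f f' f'' ((a+b)/2) b ((a+3*b)/4) (by ring) (by linarith)
    (fun t ht => hf' t ⟨by linarith [ht.1], ht.2⟩)
    (fun t ht => hf'' t ⟨by linarith [ht.1], ht.2⟩)
    (hKf _ (by continuity) ((a+b)/2) ((a+3*b)/4) (by linarith) (by linarith) (by linarith))
    (hKf _ (by continuity) ((a+3*b)/4) b (by linarith) le_rfl (by linarith))
    (hfint ((a+b)/2) ((a+3*b)/4) (by linarith) (by linarith) (by linarith))
    (hfint ((a+3*b)/4) b (by linarith) le_rfl (by linarith))
  -- quarter bounds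
  have hb1 := boundL f'' a ((3*a+b)/4) ((7*a+b)/8) p q s ((2 * |f'' ((a+b)/2)|^q)^(1/q))
    (by linarith) (by ring) hp hpq'
    (hf''m a ((3*a+b)/4) le_rfl (by linarith))
    (hf''b a ((3*a+b)/4) le_rfl (by linarith))
    (hgint a ((3*a+b)/4) le_rfl (by linarith) (by linarith))
    (fun t ht => by
      have h := hgmid a ((3*a+b)/4) le_rfl (by linarith) t ht
      have he : (a + (3*a+b)/4)/2 = (7*a+b)/8 := by ring
      rwa [he] at h)
  have hb2 := boundR f'' ((3*a+b)/4) ((a+b)/2) ((5*a+3*b)/8) p q s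
    ((2 * |f'' ((a+b)/2)|^q)^(1/q)) (by linarith) (by ring) hp hpq'
    (hf''m ((3*a+b)/4) ((a+b)/2) (by linarith) (by linarith))
    (hf''b ((3*a+b)/4) ((a+b)/2) (by linarith) (by linarith))
    (hgint ((3*a+b)/4) ((a+b)/2) (by linarith) (by linarith) (by linarith))
    (fun t ht => by
      have h := hgmid ((3*a+b)/4) ((a+b)/2) (by linarith) (by linarith) t ht
      have he : ((3*a+b)/4 + (a+b)/2)/2 = (5*a+3*b)/8 := by ring
      rwa [he] at h)
  have hb3 := boundL f'' ((a+b)/2) ((a+3*b)/4) ((3*a+5*b)/8) p q s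
    ((2 * |f'' ((a+b)/2)|^q)^(1/q)) (by linarith) (by ring) hp hpq'
    (hf''m ((a+b)/2) ((a+3*b)/4) (by linarith) (by linarith))
    (hf''b ((a+b)/2) ((a+3*b)/4) (by linarith) (by linarith))
    (hgint ((a+b)/2) ((a+3*b)/4) (by linarith) (by linarith) (by linarith))
    (fun t ht => by
      have h := hgmid ((a+b)/2) ((a+3*b)/4) (by linarith) (by linarith) t ht
      have he : ((a+b)/2 + (a+3*b)/4)/2 = (3*a+5*b)/8 := by ring
      rwa [he] at h)
  have hb4 := boundR f'' ((a+3*b)/4) b ((a+7*b)/8) p q s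
    ((2 * |f'' ((a+b)/2)|^q)^(1/q)) (by linarith) (by ring) hp hpq'
    (hf''m ((a+3*b)/4) b (by linarith) le_rfl)
    (hf''b ((a+3*b)/4) b (by linarith) le_rfl)
    (hgint ((a+3*b)/4) b (by linarith) (by linarith) le_rfl)
    (fun t ht => by
      have h := hgmid ((a+3*b)/4) b (by linarith) le_rfl t ht
      have he : ((a+3*b)/4 + b)/2 = (a+7*b)/8 := by ring
      rwa [he] at h)
  -- rewrite lengths
  have e1 : (3*a+b)/4 - a = (b-a)/4 := by ring
  have e2 : (a+b)/2 - (3*a+b)/4 = (b-a)/4 := by ring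
  have e3 : (a+3*b)/4 - (a+b)/2 = (b-a)/4 := by ring
  have e4 : b - (a+3*b)/4 = (b-a)/4 := by ring
  rw [e1] at hb1
  rw [e2] at hb2
  rw [e3] at hb3
  rw [e4] at hb4
  -- simplify the second factor
  have hL0 : (0:ℝ) ≤ (b-a)/4 := by linarith
  have hBsimp : ∀ z : ℝ, ((b-a)/4 * 2^(s-1) * |f'' z|^q)^(1/q)
      = ((b-a)/4)^(1/q) * 2^((s-1)/q) * |f'' z| := by
    intro z
    rw [Real.mul_rpow (mul_nonneg hL0 (Real.rpow_nonneg (by norm_num) _)) (hg0 z),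
      Real.mul_rpow hL0 (Real.rpow_nonneg (by norm_num) _)]
    congr 1
    · congr 1
      rw [← Real.rpow_mul (by norm_num : (0:ℝ) ≤ 2), mul_one_div]
    · rw [← Real.rpow_mul (abs_nonneg _), mul_one_div, div_self (ne_of_gt hq0), Real.rpow_one]
  rw [hBsimp] at hb1 hb2 hb3 hb4
  -- constant computation
  have hDpos : (0:ℝ) < (2*p+1)^(1/p) := Real.rpow_pos_of_pos (by linarith) _
  have hkey : (((b-a)/4)^(2*p+1)/(2^p*(2*p+1)))^(1/p) * ((b-a)/4)^(1/q)
      = (b-a)^3 / (128 * (2*p+1)^(1/p)) := by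
    have hL : (0:ℝ) < (b-a)/4 := by linarith
    have h2p : (0:ℝ) < (2:ℝ)^p := Real.rpow_pos_of_pos (by norm_num) p
    rw [Real.div_rpow (Real.rpow_nonneg hL.le _) (by nlinarith),
      Real.mul_rpow h2p.le (by linarith : (0:ℝ) ≤ 2*p+1),
      ← Real.rpow_mul hL.le, ← Real.rpow_mul (by norm_num : (0:ℝ) ≤ 2)]
    have hpp : p * (1/p) = 1 := by field_simp
    rw [hpp, Real.rpow_one, div_mul_eq_mul_div, ← Real.rpow_add hL]
    have hexp3 : (2*p+1)*(1/p) + 1/q = 3 := by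
      have h1p : (2*p+1)*(1/p) = 2 + 1/p := by field_simp
      rw [h1p]; linarith [hpq]
    rw [hexp3, show (3:ℝ) = ((3:ℕ):ℝ) by norm_num, Real.rpow_natCast]
    rw [div_eq_div_iff (by positivity) (by positivity)]
    ring
  -- middle points
  have hmid2 : |f'' ((5*a+3*b)/8)| + |f'' ((3*a+5*b)/8)| ≤ 2 * |f'' ((a+b)/2)| := by
    have h := hconc ((5*a+3*b)/8) ⟨by linarith, by linarith⟩ ((3*a+5*b)/8)
      ⟨by linarith, by linarith⟩ (1/2) (1/2) (by norm_num) (by norm_num) (by norm_num)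
    have harg : (1:ℝ)/2 * ((5*a+3*b)/8) + 1/2 * ((3*a+5*b)/8) = (a+b)/2 := by ring
    rw [harg] at h
    have h2s : (1:ℝ)/2 ≤ (1/2:ℝ)^s := by
      calc ((1:ℝ)/2) = (1/2:ℝ)^(1:ℝ) := (Real.rpow_one _).symm
        _ ≤ (1/2:ℝ)^s := Real.rpow_le_rpow_of_exponent_ge (by norm_num) (by norm_num) hs1
    have hX := hg0 ((5*a+3*b)/8)
    have hY := hg0 ((3*a+5*b)/8)
    have eX := mul_le_mul_of_nonneg_right h2s hX
    have eY := mul_le_mul_of_nonneg_right h2s hY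
    have hq' : |f'' ((5*a+3*b)/8)|^q + |f'' ((3*a+5*b)/8)|^q ≤ 2 * |f'' ((a+b)/2)|^q := by
      linarith
    exact two_point_mean _ _ _ q (le_of_lt hq) (abs_nonneg _) (abs_nonneg _) (abs_nonneg _) hq'
  -- sum identity
  have hJ1 := intervalIntegral.integral_add_adjacent_intervals
    (hfint a ((3*a+b)/4) le_rfl (by linarith) (by linarith))
    (hfint ((3*a+b)/4) ((a+b)/2) (by linarith) (by linarith) (by linarith))
  have hJ2 := intervalIntegral.integral_add_adjacent_intervals
    (hfint ((a+b)/2) ((a+3*b)/4) (by linarith) (by linarith) (by linarith))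
    (hfint ((a+3*b)/4) b (by linarith) le_rfl (by linarith))
  have hJ := intervalIntegral.integral_add_adjacent_intervals
    (hfint a ((a+b)/2) le_rfl (by linarith) (by linarith))
    (hfint ((a+b)/2) b (by linarith) le_rfl (by linarith))
  have e5 : (a+b)/2 - a = (b-a)/2 := by ring
  have e6 : b - (a+b)/2 = (b-a)/2 := by ring
  rw [e5] at hid1
  rw [e6] at hid2
  set I1 := ∫ t in a..((3*a+b)/4), (t - a)^2/2 * f'' t with hI1def
  set I2 := ∫ t in ((3*a+b)/4)..((a+b)/2), ((a+b)/2 - t)^2/2 * f'' t with hI2def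
  set I3 := ∫ t in ((a+b)/2)..((a+3*b)/4), (t - (a+b)/2)^2/2 * f'' t with hI3def
  set I4 := ∫ t in ((a+3*b)/4)..b, (b - t)^2/2 * f'' t with hI4def
  have hsum : I1 + I2 + (I3 + I4)
      = (∫ t in a..b, f t) - (b-a)/2 * f ((3*a+b)/4) - (b-a)/2 * f ((a+3*b)/4) := by
    linarith [hid1, hid2, hJ1, hJ2, hJ]
  have hE : (1 / (b - a)) * (∫ t in a..b, f t)
        - (1 / 2) * (f ((3 * a + b) / 4) + f ((a + 3 * b) / 4))
      = (1/(b-a)) * (I1 + I2 + (I3 + I4)) := by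
    rw [hsum]
    field_simp
    ring
  rw [hE, abs_mul, abs_of_pos (one_div_pos.2 hba)]
  have htri : |I1 + I2 + (I3 + I4)| ≤ |I1| + |I2| + (|I3| + |I4|) :=
    le_trans (abs_add_le _ _) (add_le_add (abs_add_le I1 I2) (abs_add_le I3 I4))
  have hsum4 := add_le_add (add_le_add hb1 hb2) (add_le_add hb3 hb4)
  refine le_trans (mul_le_mul_of_nonneg_left (le_trans htri hsum4) (by positivity)) ?_
  have hcollect : 1/(b-a) *
      ((((b-a)/4)^(2*p+1)/(2^p*(2*p+1)))^(1/p) * (((b-a)/4)^(1/q) * 2^((s-1)/q) * |f'' ((7*a+b)/8)|)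
        + (((b-a)/4)^(2*p+1)/(2^p*(2*p+1)))^(1/p) * (((b-a)/4)^(1/q) * 2^((s-1)/q) * |f'' ((5*a+3*b)/8)|)
        + ((((b-a)/4)^(2*p+1)/(2^p*(2*p+1)))^(1/p) * (((b-a)/4)^(1/q) * 2^((s-1)/q) * |f'' ((3*a+5*b)/8)|)
        + (((b-a)/4)^(2*p+1)/(2^p*(2*p+1)))^(1/p) * (((b-a)/4)^(1/q) * 2^((s-1)/q) * |f'' ((a+7*b)/8)|)))
      = (2:ℝ)^((s-1)/q) * (b-a)^2 / (128 * (2*p+1)^(1/p))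
        * (|f'' ((7*a+b)/8)| + |f'' ((5*a+3*b)/8)| + |f'' ((3*a+5*b)/8)| + |f'' ((a+7*b)/8)|) := by
    have hfac : 1/(b-a) *
        ((((b-a)/4)^(2*p+1)/(2^p*(2*p+1)))^(1/p) * (((b-a)/4)^(1/q) * 2^((s-1)/q) * |f'' ((7*a+b)/8)|)
          + (((b-a)/4)^(2*p+1)/(2^p*(2*p+1)))^(1/p) * (((b-a)/4)^(1/q) * 2^((s-1)/q) * |f'' ((5*a+3*b)/8)|)
          + ((((b-a)/4)^(2*p+1)/(2^p*(2*p+1)))^(1/p) * (((b-a)/4)^(1/q) * 2^((s-1)/q) * |f'' ((3*a+5*b)/8)|)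
          + (((b-a)/4)^(2*p+1)/(2^p*(2*p+1)))^(1/p) * (((b-a)/4)^(1/q) * 2^((s-1)/q) * |f'' ((a+7*b)/8)|)))
        = 1/(b-a) * ((((b-a)/4)^(2*p+1)/(2^p*(2*p+1)))^(1/p) * ((b-a)/4)^(1/q)) * 2^((s-1)/q)
          * (|f'' ((7*a+b)/8)| + |f'' ((5*a+3*b)/8)| + |f'' ((3*a+5*b)/8)| + |f'' ((a+7*b)/8)|) := by
      ring
    rw [hfac, hkey]
    field_simp
  rw [hcollect]
  have hW0 : (0:ℝ) ≤ (2:ℝ)^((s-1)/q) * (b-a)^2 / (128 * (2*p+1)^(1/p)) := by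
    apply div_nonneg
    · exact mul_nonneg (Real.rpow_nonneg (by norm_num) _) (sq_nonneg _)
    · nlinarith [hDpos]
  have hptsum : |f'' ((7*a+b)/8)| + |f'' ((5*a+3*b)/8)| + |f'' ((3*a+5*b)/8)| + |f'' ((a+7*b)/8)|
      ≤ |f'' ((7*a+b)/8)| + 2 * |f'' ((a+b)/2)| + |f'' ((a+7*b)/8)| := by
    linarith [hmid2]
  calc (2:ℝ)^((s-1)/q) * (b-a)^2 / (128 * (2*p+1)^(1/p))
      * (|f'' ((7*a+b)/8)| + |f'' ((5*a+3*b)/8)| + |f'' ((3*a+5*b)/8)| + |f'' ((a+7*b)/8)|)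
      ≤ (2:ℝ)^((s-1)/q) * (b-a)^2 / (128 * (2*p+1)^(1/p))
        * (|f'' ((7*a+b)/8)| + 2 * |f'' ((a+b)/2)| + |f'' ((a+7*b)/8)|) :=
        mul_le_mul_of_nonneg_left hptsum hW0
    _ = (2:ℝ) ^ ((s - 1) / q) * (b - a) ^ 2 / (128 * (2 * p + 1) ^ (1 / p)) *
          (|f'' ((7 * a + b) / 8)| + 2 * |f'' ((a + b) / 2)| + |f'' ((a + 7 * b) / 8)|) := by
        norm_num
end

section
/- Let f : [a,b] → ℝ (a < b) be such that f′ is absolutely continuous on [a,b], f″ ∈ L¹[a,b], and |f″|^q is s-concave in the second sense on [a,b] for some fixed s ∈ (0,1], where q > 1 and 1/p + 1/q = 1. Then |(1/(b−a))∫_a^b f(t) dt − f((a+b)/2)| ≤ (2^{(s−1)/q}(b−a)²/(16(2p+1)^{1/p}))[|f″((3a+b)/4)| + |f″((a+3b)/4)|]. -/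
open MeasureTheory

/-- Hermite–Hadamard-type upper bound from midpoint s-concavity. -/
lemma hh_sconcave (s c d : ℝ) (hcd : c ≤ d) (g : ℝ → ℝ)
    (hgint : IntervalIntegrable g volume c d)
    (hg : ∀ t ∈ Set.Icc c d, (2:ℝ) ^ (-s) * (g t + g (c + d - t)) ≤ g ((c + d) / 2)) :
    ∫ t in c..d, g t ≤ 2 ^ (s - 1) * (d - c) * g ((c + d) / 2) := by
  have hrefl : (∫ t in c..d, g (c + d - t)) = ∫ t in c..d, g t := by
    rw [intervalIntegral.integral_comp_sub_left g (c + d)]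
    norm_num
  have hint2 : IntervalIntegrable (fun t => g (c + d - t)) volume c d := by
    have := (hgint.comp_sub_left (c + d)).symm
    simpa using this
  have key : (2:ℝ) ^ (-s) * ((∫ t in c..d, g t) + ∫ t in c..d, g t)
      ≤ (d - c) * g ((c + d) / 2) := by
    have h1 : (2:ℝ) ^ (-s) * ((∫ t in c..d, g t) + ∫ t in c..d, g t)
        = ∫ t in c..d, (2:ℝ) ^ (-s) * (g t + g (c + d - t)) := by
      rw [intervalIntegral.integral_const_mul, intervalIntegral.integral_add hgint hint2, hrefl]
    rw [h1]
    calc ∫ t in c..d, (2:ℝ) ^ (-s) * (g t + g (c + d - t))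
        ≤ ∫ _t in c..d, g ((c + d) / 2) :=
          intervalIntegral.integral_mono_on hcd ((hgint.add hint2).const_mul _)
            intervalIntegrable_const hg
      _ = (d - c) * g ((c + d) / 2) := by simp [smul_eq_mul]
  have h2 : (2:ℝ) ^ (s - 1) * ((2:ℝ) ^ (-s) * 2) = 1 := by
    rw [show ((2:ℝ) ^ (-s) * 2) = (2:ℝ) ^ (-s) * (2:ℝ) ^ (1:ℝ) by norm_num,
      ← Real.rpow_add two_pos, ← Real.rpow_add two_pos]
    norm_num
  have h3 : (0:ℝ) ≤ (2:ℝ) ^ (s - 1) := le_of_lt (Real.rpow_pos_of_pos two_pos _)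
  calc (∫ t in c..d, g t)
      = (2:ℝ) ^ (s - 1) * ((2:ℝ) ^ (-s) * ((∫ t in c..d, g t) + ∫ t in c..d, g t)) := by
        rw [show (2:ℝ) ^ (-s) * ((∫ t in c..d, g t) + ∫ t in c..d, g t)
            = ((2:ℝ) ^ (-s) * 2) * ∫ t in c..d, g t by ring, ← mul_assoc, h2, one_mul]
    _ ≤ (2:ℝ) ^ (s - 1) * ((d - c) * g ((c + d) / 2)) := mul_le_mul_of_nonneg_left key h3
    _ = 2 ^ (s - 1) * (d - c) * g ((c + d) / 2) := by ring

/-- Hölder inequality for interval integrals with bounded functions. -/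
lemma holder_interval (p q : ℝ) (hpq : p.HolderConjugate q) (c d : ℝ) (hcd : c ≤ d)
    (w F : ℝ → ℝ) (hw0 : ∀ t ∈ Set.Icc c d, 0 ≤ w t)
    (hwc : ContinuousOn w (Set.Icc c d))
    (hF : AEStronglyMeasurable F (volume.restrict (Set.Ioc c d)))
    (C : ℝ) (hC : ∀ t ∈ Set.Icc c d, |F t| ≤ C) :
    |∫ t in c..d, w t * F t|
      ≤ (∫ t in c..d, w t ^ p) ^ (1/p) * (∫ t in c..d, |F t| ^ q) ^ (1/q) := by
  set μ := volume.restrict (Set.Ioc c d) with hμ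
  obtain ⟨M, hM⟩ := isCompact_Icc.exists_bound_of_continuousOn hwc
  have hsub : Set.Ioc c d ⊆ Set.Icc c d := Set.Ioc_subset_Icc_self
  have haew : ∀ᵐ t ∂μ, t ∈ Set.Ioc c d := ae_restrict_mem measurableSet_Ioc
  have hwm : AEStronglyMeasurable w μ :=
    (hwc.mono hsub).aestronglyMeasurable measurableSet_Ioc
  have hFam : AEStronglyMeasurable (fun t => |F t|) μ := by
    simpa [Real.norm_eq_abs] using hF.norm
  have hwmem : MemLp w (ENNReal.ofReal p) μ := by
    refine MemLp.of_bound hwm M ?_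
    filter_upwards [haew] with t ht using hM t (hsub ht)
  have hFmem : MemLp (fun t => |F t|) (ENNReal.ofReal q) μ := by
    refine MemLp.of_bound hFam C ?_
    filter_upwards [haew] with t ht
    simpa [Real.norm_eq_abs, abs_abs] using hC t (hsub ht)
  have hw0' : 0 ≤ᵐ[μ] w := by filter_upwards [haew] with t ht using hw0 t (hsub ht)
  have hF0' : 0 ≤ᵐ[μ] fun t => |F t| := Filter.Eventually.of_forall fun t => abs_nonneg _
  have hHolder := MeasureTheory.integral_mul_le_Lp_mul_Lq_of_nonneg hpq hw0' hF0' hwmem hFmem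
  calc |∫ t in c..d, w t * F t| ≤ ∫ t in c..d, |w t * F t| :=
        intervalIntegral.abs_integral_le_integral_abs hcd
    _ = ∫ t, |w t * F t| ∂μ := by rw [intervalIntegral.integral_of_le hcd]
    _ = ∫ t, w t * |F t| ∂μ := by
        refine integral_congr_ae ?_
        filter_upwards [haew] with t ht
        rw [abs_mul, abs_of_nonneg (hw0 t (hsub ht))]
    _ ≤ (∫ t, w t ^ p ∂μ) ^ (1/p) * (∫ t, |F t| ^ q ∂μ) ^ (1/q) := hHolder
    _ = (∫ t in c..d, w t ^ p) ^ (1/p) * (∫ t in c..d, |F t| ^ q) ^ (1/q) := by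
        rw [intervalIntegral.integral_of_le hcd, intervalIntegral.integral_of_le hcd]

set_option maxHeartbeats 1000000 in
theorem stmt16 (a b : ℝ) (ha : 0 ≤ a) (hab : a < b) (f f' f'' : ℝ → ℝ)
    (hf' : ∀ t ∈ Set.Icc a b, HasDerivAt f (f' t) t)
    (hf'' : ∀ t ∈ Set.Icc a b, HasDerivAt f' (f'' t) t)
    (hint : IntervalIntegrable f'' volume a b)
    (s : ℝ) (hs0 : 0 < s) (hs1 : s ≤ 1)
    (p q : ℝ) (hp : 1 < p) (hq : 1 < q) (hpq : 1 / p + 1 / q = 1)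
    (hconc : SConcaveOn s (Set.Icc a b) (fun t => |f'' t| ^ q)) :
    |((1 / (b - a)) * ∫ t in a..b, f t) - f ((a + b) / 2)|
      ≤ (2 : ℝ) ^ ((s - 1) / q) * (b - a) ^ 2 / (16 * (2 * p + 1) ^ (1 / p)) *
          (|f'' ((3 * a + b) / 4)| + |f'' ((a + 3 * b) / 4)|) := by
  have hp0 : (0:ℝ) < p := lt_trans one_pos hp
  have hq0 : (0:ℝ) < q := lt_trans one_pos hq
  have hqne : q ≠ 0 := ne_of_gt hq0
  have hpq' : p.HolderConjugate q := ⟨by rw [inv_one, ← one_div, ← one_div]; exact hpq, hp0, hq0⟩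
  have hba : (0:ℝ) < b - a := sub_pos.mpr hab
  set m : ℝ := (a + b) / 2 with hm
  have ham : a ≤ m := by rw [hm]; linarith
  have hmb : m ≤ b := by rw [hm]; linarith
  have habl : a ≤ b := le_of_lt hab
  have hfc : ContinuousOn f (Set.Icc a b) :=
    fun t ht => (hf' t ht).continuousAt.continuousWithinAt
  have hf'c : ContinuousOn f' (Set.Icc a b) :=
    fun t ht => (hf'' t ht).continuousAt.continuousWithinAt
  set g : ℝ → ℝ := fun t => |f'' t| ^ q with hgdef
  have hgnn : ∀ t, 0 ≤ g t := fun t => Real.rpow_nonneg (abs_nonneg _) q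
  -- pointwise midpoint s-concavity
  have hmidpt : ∀ c d : ℝ, a ≤ c → d ≤ b → ∀ t ∈ Set.Icc c d,
      (2:ℝ) ^ (-s) * (g t + g (c + d - t)) ≤ g ((c + d) / 2) := by
    intro c d hac hdb t ht
    have ht1 : t ∈ Set.Icc a b := ⟨le_trans hac ht.1, le_trans ht.2 hdb⟩
    have ht2 : c + d - t ∈ Set.Icc a b :=
      ⟨by have := ht.2; linarith, by have := ht.1; linarith⟩
    have hc := hconc t ht1 (c + d - t) ht2 (1/2) (1/2) (by norm_num) (by norm_num) (by norm_num)
    have h12 : ((1:ℝ)/2) ^ s = (2:ℝ) ^ (-s) := by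
      rw [Real.rpow_neg (by norm_num : (0:ℝ) ≤ 2), one_div,
        Real.inv_rpow (by norm_num : (0:ℝ) ≤ 2)]
    have harg : (1/2 : ℝ) * t + (1/2 : ℝ) * (c + d - t) = (c + d)/2 := by ring
    rw [harg, h12] at hc
    calc (2:ℝ)^(-s) * (g t + g (c+d-t))
        = (2:ℝ)^(-s) * g t + (2:ℝ)^(-s) * g (c+d-t) := by ring
      _ ≤ g ((c+d)/2) := hc
  -- global bound on g
  have hgb : ∀ t ∈ Set.Icc a b, g t ≤ 2 ^ s * g m := by
    intro t ht
    have h0 := hmidpt a b le_rfl le_rfl t ht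
    have hpos : (0:ℝ) < (2:ℝ)^(-s) := Real.rpow_pos_of_pos two_pos _
    have h1 : (2:ℝ)^(-s) * g t ≤ g ((a+b)/2) := by
      nlinarith [hgnn (a + b - t)]
    have h2 : (2:ℝ)^s * ((2:ℝ)^(-s) * g t) = g t := by
      rw [← mul_assoc, ← Real.rpow_add two_pos]; simp
    calc g t = (2:ℝ)^s * ((2:ℝ)^(-s) * g t) := h2.symm
      _ ≤ 2^s * g m := by
          have := mul_le_mul_of_nonneg_left h1 (le_of_lt (Real.rpow_pos_of_pos two_pos s))
          rw [hm]
          exact this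
  -- measurability
  have hmeasab : AEStronglyMeasurable f'' (volume.restrict (Set.Ioc a b)) := by
    have h1 := intervalIntegrable_iff.mp hint
    rw [Set.uIoc_of_le habl] at h1
    exact h1.aestronglyMeasurable
  have hmeas : ∀ c d : ℝ, a ≤ c → d ≤ b →
      AEStronglyMeasurable f'' (volume.restrict (Set.Ioc c d)) := fun c d hac hdb =>
    hmeasab.mono_measure (Measure.restrict_mono (Set.Ioc_subset_Ioc hac hdb) le_rfl)
  have hgmeas : ∀ c d : ℝ, a ≤ c → d ≤ b →
      AEStronglyMeasurable g (volume.restrict (Set.Ioc c d)) := by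
    intro c d hac hdb
    have hcont : Continuous fun x : ℝ => |x| ^ q :=
      continuous_abs.rpow_const (fun x => Or.inr (le_of_lt hq0))
    exact hcont.comp_aestronglyMeasurable (hmeas c d hac hdb)
  have hgint : ∀ c d : ℝ, a ≤ c → c ≤ d → d ≤ b → IntervalIntegrable g volume c d := by
    intro c d hac hcd hdb
    rw [intervalIntegrable_iff, Set.uIoc_of_le hcd]
    refine (integrable_const ((2:ℝ)^s * g m)).mono' (hgmeas c d hac hdb) ?_
    filter_upwards [ae_restrict_mem measurableSet_Ioc] with t ht
    have ht' : t ∈ Set.Icc a b := ⟨le_trans hac (le_of_lt ht.1), le_trans ht.2 hdb⟩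
    rw [Real.norm_eq_abs, abs_of_nonneg (hgnn t)]
    exact hgb t ht'
  -- bound on |f''|
  set C : ℝ := ((2:ℝ)^s * g m) ^ (1/q) with hCdef
  have hCb : ∀ t ∈ Set.Icc a b, |f'' t| ≤ C := by
    intro t ht
    have h1 : |f'' t| = (g t) ^ (1/q) := by
      rw [hgdef]
      simp only
      rw [one_div, Real.rpow_rpow_inv (abs_nonneg _) hqne]
    rw [h1, hCdef]
    exact Real.rpow_le_rpow (hgnn t) (hgb t ht) (by positivity)
  -- integrability pieces
  have hsubm : Set.uIcc a m ⊆ Set.Icc a b := by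
    rw [Set.uIcc_of_le ham]; exact Set.Icc_subset_Icc le_rfl hmb
  have hsubm' : Set.uIcc m b ⊆ Set.Icc a b := by
    rw [Set.uIcc_of_le hmb]; exact Set.Icc_subset_Icc ham le_rfl
  have hsubab : Set.uIcc a m ⊆ Set.uIcc a b := by
    rw [Set.uIcc_of_le habl]; exact hsubm
  have hsubab' : Set.uIcc m b ⊆ Set.uIcc a b := by
    rw [Set.uIcc_of_le habl]; exact hsubm'
  have hf''1 : IntervalIntegrable f'' volume a m := hint.mono_set hsubab
  have hf''2 : IntervalIntegrable f'' volume m b := hint.mono_set hsubab'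
  have hf'1 : IntervalIntegrable f' volume a m := (hf'c.mono hsubm).intervalIntegrable
  have hf'2 : IntervalIntegrable f' volume m b := (hf'c.mono hsubm').intervalIntegrable
  have hfint1 : IntervalIntegrable f volume a m := (hfc.mono hsubm).intervalIntegrable
  have hfint2 : IntervalIntegrable f volume m b := (hfc.mono hsubm').intervalIntegrable
  -- integration by parts on [a, m]
  have hu1 : ∀ x ∈ Set.uIcc a m, HasDerivAt (fun t => (t-a)^2) (2*(x-a)) x := by
    intro x _
    have h := ((hasDerivAt_id x).sub_const a).fun_pow 2
    simpa using h
  have hu2 : ∀ x ∈ Set.uIcc a m, HasDerivAt (fun t => t - a) 1 x := by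
    intro x _
    simpa using (hasDerivAt_id x).sub_const a
  have hu1int : IntervalIntegrable (fun x => 2*(x-a)) volume a m :=
    (continuous_const.mul (continuous_id.sub continuous_const) : Continuous fun x : ℝ => 2*(x-a)).intervalIntegrable a m
  have ibp1 := intervalIntegral.integral_mul_deriv_eq_deriv_mul hu1
    (fun x hx => hf'' x (hsubm hx)) hu1int hf''1
  have ibp2 := intervalIntegral.integral_mul_deriv_eq_deriv_mul hu2
    (fun x hx => hf' x (hsubm hx))
    ((continuous_const : Continuous fun _ : ℝ => (1:ℝ)).intervalIntegrable a m) hf'1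
  -- integration by parts on [m, b]
  have hu3 : ∀ x ∈ Set.uIcc m b, HasDerivAt (fun t => (b-t)^2) (-(2*(b-x))) x := by
    intro x _
    have h := ((hasDerivAt_id x).const_sub b).fun_pow 2
    refine h.congr_deriv ?_
    norm_num
  have hu4 : ∀ x ∈ Set.uIcc m b, HasDerivAt (fun t => b - t) (-1) x := by
    intro x _
    simpa using (hasDerivAt_id x).const_sub b
  have hu3int : IntervalIntegrable (fun x => -(2*(b-x))) volume m b :=
    ((continuous_const.mul (continuous_const.sub continuous_id)).neg : Continuous fun x : ℝ => -(2*(b-x))).intervalIntegrable m b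
  have ibp3 := intervalIntegral.integral_mul_deriv_eq_deriv_mul hu3
    (fun x hx => hf'' x (hsubm' hx)) hu3int hf''2
  have ibp4 := intervalIntegral.integral_mul_deriv_eq_deriv_mul hu4
    (fun x hx => hf' x (hsubm' hx))
    ((continuous_const : Continuous fun _ : ℝ => (-1:ℝ)).intervalIntegrable m b) hf'2
  set I1 : ℝ := ∫ t in a..m, (t-a)^2 * f'' t with hI1def
  set I2 : ℝ := ∫ t in m..b, (b-t)^2 * f'' t with hI2def
  -- simplify the parts identities
  have e1 : (∫ x in a..m, (2*(x-a)) * f' x) = 2 * ∫ x in a..m, (x-a) * f' x := by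
    rw [← intervalIntegral.integral_const_mul]
    apply intervalIntegral.integral_congr
    intro x _; ring
  have e2 : (∫ x in m..b, (-(2*(b-x))) * f' x) = -(2 * ∫ x in m..b, (b-x) * f' x) := by
    rw [← intervalIntegral.integral_const_mul, ← intervalIntegral.integral_neg]
    apply intervalIntegral.integral_congr
    intro x _; ring
  have e3 : (∫ x in a..m, (1:ℝ) * f x) = ∫ x in a..m, f x := by
    apply intervalIntegral.integral_congr; intro x _; ring
  have e4 : (∫ x in m..b, (-1:ℝ) * f x) = -∫ x in m..b, f x := by
    rw [← intervalIntegral.integral_neg]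
    apply intervalIntegral.integral_congr; intro x _; ring
  have hI1eq : I1 = (m-a)^2 * f' m - 2*((m-a) * f m - ∫ x in a..m, f x) := by
    rw [ibp1, e1, ibp2, e3]
    ring
  have hI2eq : I2 = -((b-m)^2 * f' m) - 2*((b-m) * f m - ∫ x in m..b, f x) := by
    rw [ibp3, e2, ibp4, e4]
    ring
  have hadj : (∫ t in a..m, f t) + ∫ t in m..b, f t = ∫ t in a..b, f t :=
    intervalIntegral.integral_add_adjacent_intervals hfint1 hfint2
  have hkey : I1 + I2 = 2 * (∫ t in a..b, f t) - 2 * (b - a) * f m := by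
    rw [hI1eq, hI2eq, ← hadj, hm]
    ring
  have hlhs : (1 / (b - a)) * (∫ t in a..b, f t) - f m = (I1 + I2) / (2 * (b - a)) := by
    rw [hkey]
    field_simp
  -- half-interval quantities
  set h : ℝ := (b - a)/2 with hhdef
  have hh0 : (0:ℝ) < h := by rw [hhdef]; linarith
  have hma : m - a = h := by rw [hm, hhdef]; ring
  have hbm : b - m = h := by rw [hm, hhdef]; ring
  set A : ℝ := |f'' ((3*a+b)/4)| with hAdef
  set B : ℝ := |f'' ((a+3*b)/4)| with hBdef
  -- Hölder bounds
  have hH1 := holder_interval p q hpq' a m ham (fun t => (t-a)^2) f''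
    (fun t _ => sq_nonneg _)
    (((continuous_id.sub continuous_const).pow 2 : Continuous fun t : ℝ => (t-a)^2).continuousOn)
    (hmeas a m le_rfl hmb) C (fun t ht => hCb t (Set.Icc_subset_Icc le_rfl hmb ht))
  have hH2 := holder_interval p q hpq' m b hmb (fun t => (b-t)^2) f''
    (fun t _ => sq_nonneg _)
    (((continuous_const.sub continuous_id).pow 2 : Continuous fun t : ℝ => (b-t)^2).continuousOn)
    (hmeas m b ham le_rfl) C (fun t ht => hCb t (Set.Icc_subset_Icc ham le_rfl ht))
  -- weight integrals
  have hW1 : (∫ t in a..m, ((t-a)^2 : ℝ)^p) = h^(2*p+1) / (2*p+1) := by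
    have e : Set.EqOn (fun t : ℝ => ((t-a)^2 : ℝ)^p) (fun t : ℝ => (t-a)^(2*p))
        (Set.uIcc a m) := by
      intro t ht
      rw [Set.uIcc_of_le ham] at ht
      have h0 : (0:ℝ) ≤ t - a := by linarith [ht.1]
      simp only
      rw [← Real.rpow_natCast (t-a) 2, ← Real.rpow_mul h0]
      norm_num
    rw [intervalIntegral.integral_congr e,
      show (fun t : ℝ => (t - a) ^ (2*p)) = fun t : ℝ => (fun x : ℝ => x ^ (2*p)) (t - a)
        from rfl,
      intervalIntegral.integral_comp_sub_right (fun x : ℝ => x ^ (2*p)) a, sub_self,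
      integral_rpow (Or.inl (by linarith : (-1:ℝ) < 2*p)), hma,
      Real.zero_rpow (by positivity : 2*p+1 ≠ 0)]
    ring
  have hW2 : (∫ t in m..b, ((b-t)^2 : ℝ)^p) = h^(2*p+1) / (2*p+1) := by
    have e : Set.EqOn (fun t : ℝ => ((b-t)^2 : ℝ)^p) (fun t : ℝ => (b-t)^(2*p))
        (Set.uIcc m b) := by
      intro t ht
      rw [Set.uIcc_of_le hmb] at ht
      have h0 : (0:ℝ) ≤ b - t := by linarith [ht.2]
      simp only
      rw [← Real.rpow_natCast (b-t) 2, ← Real.rpow_mul h0]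
      norm_num
    rw [intervalIntegral.integral_congr e,
      show (fun t : ℝ => (b - t) ^ (2*p)) = fun t : ℝ => (fun x : ℝ => x ^ (2*p)) (b - t)
        from rfl,
      intervalIntegral.integral_comp_sub_left (fun x : ℝ => x ^ (2*p)) b, sub_self,
      integral_rpow (Or.inl (by linarith : (-1:ℝ) < 2*p)), hbm,
      Real.zero_rpow (by positivity : 2*p+1 ≠ 0)]
    ring
  -- HH bounds on the g-integrals
  have hhh1 := hh_sconcave s a m ham g (hgint a m le_rfl ham hmb) (hmidpt a m le_rfl hmb)
  have hhh2 := hh_sconcave s m b hmb g (hgint m b ham hmb le_rfl) (hmidpt m b ham le_rfl)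
  have hq1 : (a + m)/2 = (3*a+b)/4 := by rw [hm]; ring
  have hq2 : (m + b)/2 = (a+3*b)/4 := by rw [hm]; ring
  have hG1 : (∫ t in a..m, g t) ≤ 2^(s-1) * h * A^q := by
    calc (∫ t in a..m, g t) ≤ 2 ^ (s - 1) * (m - a) * g ((a + m) / 2) := hhh1
      _ = 2^(s-1) * h * A^q := by rw [hma, hq1, hAdef, hgdef]
  have hG2 : (∫ t in m..b, g t) ≤ 2^(s-1) * h * B^q := by
    calc (∫ t in m..b, g t) ≤ 2 ^ (s - 1) * (b - m) * g ((m + b) / 2) := hhh2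
      _ = 2^(s-1) * h * B^q := by rw [hbm, hq2, hBdef, hgdef]
  have hG1nn : (0:ℝ) ≤ ∫ t in a..m, g t :=
    intervalIntegral.integral_nonneg ham (fun u _ => hgnn u)
  have hG2nn : (0:ℝ) ≤ ∫ t in m..b, g t :=
    intervalIntegral.integral_nonneg hmb (fun u _ => hgnn u)
  -- the algebraic constant
  set K : ℝ := (2:ℝ)^((s-1)/q) / (2*p+1)^(1/p) * h^(3:ℕ) with hKdef
  have halg : ∀ X : ℝ, 0 ≤ X →
      (h^(2*p+1)/(2*p+1))^(1/p) * ((2:ℝ)^(s-1) * h * X^q)^(1/q) = K * X := by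
    intro X hX
    have h1 : ((h:ℝ)^(2*p+1)/(2*p+1))^(1/p)
        = h^((2*p+1)*(1/p)) / (2*p+1)^(1/p) := by
      rw [Real.div_rpow (by positivity) (by positivity), ← Real.rpow_mul (le_of_lt hh0)]
    have h2 : ((2:ℝ)^(s-1) * h * X^q)^(1/q)
        = (2:ℝ)^((s-1)*(1/q)) * h^(1/q) * X := by
      rw [Real.mul_rpow (by positivity) (Real.rpow_nonneg hX q),
        Real.mul_rpow (by positivity) (le_of_lt hh0),
        ← Real.rpow_mul (by norm_num : (0:ℝ) ≤ 2)]
      rw [one_div, Real.rpow_rpow_inv hX hqne]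
    have hexp : (2*p+1)*(1/p) + 1/q = 3 := by
      have hpe : (2*p+1)*(1/p) = 2 + 1/p := by field_simp
      rw [hpe]; linarith
    have h3 : h^((2*p+1)*(1/p)) * h^(1/q) = h^(3:ℕ) := by
      rw [← Real.rpow_add hh0, hexp, ← Real.rpow_natCast h 3]
      norm_num
    rw [h1, h2, hKdef]
    rw [show ((s-1)*(1/q)) = (s-1)/q by ring]
    field_simp
    rw [← h3]
    ring
  -- combine into bounds for I1 and I2
  have hB1 : |I1| ≤ K * A := by
    have step := hH1
    rw [hW1] at step
    calc |I1| ≤ (h^(2*p+1)/(2*p+1))^(1/p) * (∫ t in a..m, |f'' t|^q)^(1/q) := step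
      _ ≤ (h^(2*p+1)/(2*p+1))^(1/p) * ((2:ℝ)^(s-1) * h * A^q)^(1/q) := by
          apply mul_le_mul_of_nonneg_left _ (by positivity)
          exact Real.rpow_le_rpow hG1nn hG1 (by positivity)
      _ = K * A := halg A (abs_nonneg _)
  have hB2 : |I2| ≤ K * B := by
    have step := hH2
    rw [hW2] at step
    calc |I2| ≤ (h^(2*p+1)/(2*p+1))^(1/p) * (∫ t in m..b, |f'' t|^q)^(1/q) := step
      _ ≤ (h^(2*p+1)/(2*p+1))^(1/p) * ((2:ℝ)^(s-1) * h * B^q)^(1/q) := by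
          apply mul_le_mul_of_nonneg_left _ (by positivity)
          exact Real.rpow_le_rpow hG2nn hG2 (by positivity)
      _ = K * B := halg B (abs_nonneg _)
  -- final assembly
  have habs : |I1 + I2| ≤ K * A + K * B := (abs_add_le _ _).trans (add_le_add hB1 hB2)
  have hfinal : |(1 / (b - a)) * (∫ t in a..b, f t) - f m|
      ≤ (K * A + K * B) / (2 * (b - a)) := by
    rw [hlhs, abs_div, abs_of_pos (show (0:ℝ) < 2*(b-a) by linarith)]
    exact (div_le_div_iff_of_pos_right (by linarith)).mpr habs
  have hKval : K = 2^((s-1)/q) * (b-a)^3 / (8 * (2*p+1)^(1/p)) := by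
    have hpp : (0:ℝ) < (2*p+1)^(1/p) := Real.rpow_pos_of_pos (by linarith) _
    rw [hKdef, hhdef]
    field_simp
    ring
  refine hfinal.trans_eq ?_
  have hpp : (0:ℝ) < (2*p+1)^(1/p) := Real.rpow_pos_of_pos (by linarith) _
  rw [hKval]
  field_simp
  ring
end
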